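/- arXiv:math/0304366 — 2 statements merged into one kernel-verified Lean document; each statement's English description precedes it below -/
import Mathlib

section
/- For the tied-down simple random walk model with δ-pinning, the variance is uniformly bounded: for every β > 0, sup_{n, x} Ê_{n,β}(φ_x²) < ∞, where Ê_{n,β} is expectation with respect to the measure P̂_{n,β}(φ) = (1/Ẑ_{n,β}) exp(β ∑_{x=1}^{2n−1} 1_{φ_x = 0}) P_n(φ). -/
open Filter Classical

/-- Position after `i` steps of the nearest-neighbor walk with step signs `s` (`true` = +1). -/
def walkPos (n : ℕ) (s : Fin n → Bool) (i : ℕ) : ℤ :=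
  ∑ j : Fin n, if (j : ℕ) < i then (if s j then (1 : ℤ) else -1) else 0

/-- The set of tied-down nearest-neighbor paths of length `2n` (encoded by their step signs):
`φ_0 = 0` and `φ_{2n} = 0`. -/
noncomputable def tiedPaths (n : ℕ) : Finset (Fin (2 * n) → Bool) :=
  Finset.univ.filter (fun s => walkPos (2 * n) s (2 * n) = 0)

/-- Number of pinned sites: `∑_{x=1}^{2n−1} 1_{φ_x = 0}`. -/
noncomputable def numZeros (n : ℕ) (s : Fin (2 * n) → Bool) : ℕ :=
  ((Finset.Icc 1 (2 * n - 1)).filter (fun x => walkPos (2 * n) s x = 0)).card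

/-- Expectation of `f` under the δ-pinned tied-down walk measure
`P̂_{n,β}(φ) ∝ exp(β ∑_{x=1}^{2n−1} 1_{φ_x=0}) P_n(φ)`. -/
noncomputable def pinnedExp (n : ℕ) (β : ℝ) (f : (Fin (2 * n) → Bool) → ℝ) : ℝ :=
  (∑ s ∈ tiedPaths n, Real.exp (β * numZeros n s) * f s) /
    (∑ s ∈ tiedPaths n, Real.exp (β * numZeros n s))

namespace SRW

/-! ### walkPos basics -/

lemma walkPos_zero (m : ℕ) (s : Fin m → Bool) : walkPos m s 0 = 0 := by
  simp [walkPos]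

lemma walkPos_succ (m : ℕ) (s : Fin m → Bool) (t : ℕ) :
    walkPos m s (t + 1) =
      walkPos m s t + (if h : t < m then (if s ⟨t, h⟩ then (1 : ℤ) else -1) else 0) := by
  unfold walkPos
  rcases lt_or_ge t m with h | h
  · rw [dif_pos h]
    rw [← Finset.sum_add_sum_compl {(⟨t, h⟩ : Fin m)}ᶜ, ← Finset.sum_add_sum_compl {(⟨t, h⟩ : Fin m)}ᶜ]
    simp only [compl_compl, Finset.sum_singleton]
    have h1 : ∀ j ∈ ({(⟨t, h⟩ : Fin m)}ᶜ : Finset (Fin m)),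
        (if (j : ℕ) < t + 1 then (if s j then (1 : ℤ) else -1) else 0) =
        (if (j : ℕ) < t then (if s j then (1 : ℤ) else -1) else 0) := by
      intro j hj
      have : (j : ℕ) ≠ t := by
        simp only [Finset.mem_compl, Finset.mem_singleton] at hj
        intro hc; exact hj (Fin.ext hc)
      rcases lt_trichotomy (j : ℕ) t with h2 | h2 | h2
      · rw [if_pos (by omega), if_pos h2]
      · exact absurd h2 this
      · rw [if_neg (by omega), if_neg (by omega)]
    rw [Finset.sum_congr rfl h1]
    simp only [if_pos (Nat.lt_succ_self t), if_neg (lt_irrefl t)]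
    ring
  · rw [dif_neg (by omega)]
    have h1 : ∀ j : Fin m, ((j : ℕ) < t + 1) = ((j : ℕ) < t) := by
      intro j; have := j.isLt; simp only [eq_iff_iff]; omega
    simp only [h1, add_zero]

lemma walkPos_saturate (m : ℕ) (s : Fin m → Bool) {t : ℕ} (h : m ≤ t) :
    walkPos m s t = walkPos m s m := by
  unfold walkPos
  apply Finset.sum_congr rfl
  intro j _
  have hj := j.isLt
  rw [if_pos (show (j : ℕ) < t by omega), if_pos hj]

lemma abs_walkPos_le (m : ℕ) (s : Fin m → Bool) (t : ℕ) : |walkPos m s t| ≤ (t : ℤ) := by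
  induction t with
  | zero => simp [walkPos_zero]
  | succ t ih =>
      rw [walkPos_succ]
      have h2 : |(if h : t < m then (if s ⟨t, h⟩ then (1 : ℤ) else -1) else 0)| ≤ 1 := by
        split
        · split <;> simp
        · simp
      calc |walkPos m s t + _| ≤ |walkPos m s t| + _ := abs_add_le _ _
        _ ≤ (t : ℤ) + 1 := add_le_add ih h2
        _ = ((t + 1 : ℕ) : ℤ) := by push_cast; ring

end SRW
namespace SRW

/-! ### subwords and joins -/

def subw (m a L : ℕ) (h : a + L ≤ m) (s : Fin m → Bool) : Fin L → Bool :=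
  fun i => s ⟨a + i, by have := i.isLt; omega⟩

lemma walkPos_subw (m a L : ℕ) (h : a + L ≤ m) (s : Fin m → Bool) :
    ∀ t, t ≤ L → walkPos L (subw m a L h s) t = walkPos m s (a + t) - walkPos m s a := by
  intro t
  induction t with
  | zero => intro _; simp [walkPos_zero]
  | succ t ih =>
      intro ht
      have ht' : t < L := by omega
      rw [walkPos_succ, ih (by omega), dif_pos ht']
      have : a + (t + 1) = (a + t) + 1 := by ring
      rw [this, walkPos_succ, dif_pos (show a + t < m by omega)]
      have : subw m a L h s ⟨t, ht'⟩ = s ⟨a + t, by omega⟩ := rfl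
      rw [this]; ring

def joinw (c d : ℕ) (u : Fin c → Bool) (v : Fin d → Bool) : Fin (c + d) → Bool :=
  fun i => if h : (i : ℕ) < c then u ⟨i, h⟩ else v ⟨(i : ℕ) - c, by have := i.isLt; omega⟩

lemma walkPos_joinw_left (c d : ℕ) (u : Fin c → Bool) (v : Fin d → Bool) :
    ∀ t, t ≤ c → walkPos (c + d) (joinw c d u v) t = walkPos c u t := by
  intro t
  induction t with
  | zero => intro _; simp [walkPos_zero]
  | succ t ih =>
      intro ht
      have ht' : t < c := by omega
      rw [walkPos_succ, ih (by omega), walkPos_succ, dif_pos ht',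
        dif_pos (show t < c + d by omega)]
      have : joinw c d u v ⟨t, by omega⟩ = u ⟨t, ht'⟩ := dif_pos ht'
      rw [this]

lemma walkPos_joinw_right (c d : ℕ) (u : Fin c → Bool) (v : Fin d → Bool) :
    ∀ t, t ≤ d → walkPos (c + d) (joinw c d u v) (c + t) = walkPos c u c + walkPos d v t := by
  intro t
  induction t with
  | zero =>
      intro _
      rw [add_zero, walkPos_joinw_left c d u v c le_rfl, walkPos_zero, add_zero]
  | succ t ih =>
      intro ht
      have ht' : t < d := by omega
      have e1 : c + (t + 1) = (c + t) + 1 := by ring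
      rw [e1, walkPos_succ, ih (by omega), walkPos_succ, dif_pos ht',
        dif_pos (show c + t < c + d by omega)]
      have : joinw c d u v ⟨c + t, by omega⟩ = v ⟨t, ht'⟩ := by
        have h2 : ¬ ((c + t : ℕ) < c) := by omega
        simp only [joinw, dif_neg h2, Nat.add_sub_cancel_left]
      rw [this]; ring

/-! ### bridges and partition function -/

noncomputable def bset (m : ℕ) : Finset (Fin m → Bool) :=
  Finset.univ.filter (fun w => walkPos m w m = 0)

noncomputable def zcount (m : ℕ) (w : Fin m → Bool) : ℕ :=
  ((Finset.Icc 1 (m - 1)).filter (fun t => walkPos m w t = 0)).card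

noncomputable def Qp (β : ℝ) (m : ℕ) : ℝ := ∑ w ∈ bset m, Real.exp (β * zcount m w)

lemma Qp_nonneg (β : ℝ) (m : ℕ) : 0 ≤ Qp β m :=
  Finset.sum_nonneg fun _ _ => (Real.exp_pos _).le

lemma Qp_zero (β : ℝ) : Qp β 0 = 1 := by
  have h1 : bset 0 = Finset.univ := by
    unfold bset
    rw [Finset.filter_true_of_mem]
    intro w _
    exact walkPos_zero 0 w
  have h2 : ∀ w : Fin 0 → Bool, zcount 0 w = 0 := by
    intro w
    unfold zcount
    simp
  unfold Qp
  rw [h1]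
  have : ∀ w ∈ (Finset.univ : Finset (Fin 0 → Bool)), Real.exp (β * zcount 0 w) = 1 := by
    intro w _; rw [h2, Nat.cast_zero, mul_zero, Real.exp_zero]
  rw [Finset.sum_congr rfl this, Finset.sum_const, Finset.card_univ]
  simp

lemma joinw_mem_bset {c d : ℕ} {u : Fin c → Bool} {v : Fin d → Bool}
    (hu : u ∈ bset c) (hv : v ∈ bset d) : joinw c d u v ∈ bset (c + d) := by
  simp only [bset, Finset.mem_filter, Finset.mem_univ, true_and] at *
  rw [walkPos_joinw_right c d u v d le_rfl, hu, hv, add_zero]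

lemma joinw_injective (c d : ℕ) : Function.Injective
    (fun p : (Fin c → Bool) × (Fin d → Bool) => joinw c d p.1 p.2) := by
  intro p q h
  simp only at h
  have h1 : p.1 = q.1 := by
    funext i
    have := congrFun h ⟨(i : ℕ), by have := i.isLt; omega⟩
    simpa only [joinw, dif_pos i.isLt, Fin.eta] using this
  have h2 : p.2 = q.2 := by
    funext i
    have := congrFun h ⟨c + (i : ℕ), by have := i.isLt; omega⟩
    have hnc : ¬ (c + (i : ℕ) < c) := by omega
    simp only [joinw, dif_neg hnc] at this
    have he : c + (i : ℕ) - c = (i : ℕ) := by omega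
    simpa only [he, Fin.eta] using this
  exact Prod.ext h1 h2

lemma zcount_joinw_ge {c d : ℕ} {u : Fin c → Bool} {v : Fin d → Bool}
    (hu : u ∈ bset c) : zcount c u + zcount d v ≤ zcount (c + d) (joinw c d u v) := by
  simp only [bset, Finset.mem_filter, Finset.mem_univ, true_and] at hu
  classical
  set A := (Finset.Icc 1 (c - 1)).filter (fun t => walkPos c u t = 0) with hA
  set B := (Finset.Icc 1 (d - 1)).filter (fun t => walkPos d v t = 0) with hB
  have hsub : A ∪ B.image (fun t => c + t) ⊆
      (Finset.Icc 1 (c + d - 1)).filter (fun t => walkPos (c + d) (joinw c d u v) t = 0) := by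
    intro t ht
    rcases Finset.mem_union.mp ht with h | h
    · simp only [hA, Finset.mem_filter, Finset.mem_Icc] at h
      have hc2 : 1 ≤ t ∧ t ≤ c - 1 := h.1.imp id id
      have hc1 : 1 ≤ c := by omega
      simp only [Finset.mem_filter, Finset.mem_Icc]
      refine ⟨⟨by omega, by omega⟩, ?_⟩
      rw [walkPos_joinw_left c d u v t (by omega)]
      exact h.2
    · rcases Finset.mem_image.mp h with ⟨t', ht', rfl⟩
      simp only [hB, Finset.mem_filter, Finset.mem_Icc] at ht'
      simp only [Finset.mem_filter, Finset.mem_Icc]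
      refine ⟨⟨by omega, by omega⟩, ?_⟩
      rw [walkPos_joinw_right c d u v t' (by omega), hu, ht'.2, add_zero]
  have hdisj : Disjoint A (B.image (fun t => c + t)) := by
    rw [Finset.disjoint_left]
    intro t htA htB
    simp only [hA, Finset.mem_filter, Finset.mem_Icc] at htA
    rcases Finset.mem_image.mp htB with ⟨t', _, rfl⟩
    omega
  calc zcount c u + zcount d v = A.card + B.card := rfl
    _ = A.card + (B.image (fun t => c + t)).card := by
        rw [Finset.card_image_of_injective _ (fun a b h => by omega)]
    _ = (A ∪ B.image (fun t => c + t)).card := (Finset.card_union_of_disjoint hdisj).symm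
    _ ≤ _ := Finset.card_le_card hsub
  
lemma Qp_supermul {β : ℝ} (hβ : 0 ≤ β) (c d : ℕ) : Qp β c * Qp β d ≤ Qp β (c + d) := by
  classical
  have key : Qp β c * Qp β d =
      ∑ p ∈ (bset c) ×ˢ (bset d), Real.exp (β * zcount c p.1) * Real.exp (β * zcount d p.2) := by
    unfold Qp
    rw [Finset.sum_mul_sum, ← Finset.sum_product']
  rw [key]
  have step1 : ∑ p ∈ (bset c) ×ˢ (bset d),
      Real.exp (β * zcount c p.1) * Real.exp (β * zcount d p.2) ≤
      ∑ p ∈ (bset c) ×ˢ (bset d),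
      Real.exp (β * zcount (c + d) (joinw c d p.1 p.2)) := by
    apply Finset.sum_le_sum
    intro p hp
    rw [← Real.exp_add, ← mul_add]
    apply Real.exp_le_exp.mpr
    apply mul_le_mul_of_nonneg_left _ hβ
    have := zcount_joinw_ge (u := p.1) (v := p.2) (Finset.mem_product.mp hp).1
    exact_mod_cast this
  refine step1.trans ?_
  have himg : ∑ p ∈ (bset c) ×ˢ (bset d), Real.exp (β * zcount (c + d) (joinw c d p.1 p.2)) =
      ∑ w ∈ ((bset c) ×ˢ (bset d)).image (fun p => joinw c d p.1 p.2),
        Real.exp (β * zcount (c + d) w) := by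
    rw [Finset.sum_image (fun p _ q _ h => joinw_injective c d h)]
  rw [himg]
  apply Finset.sum_le_sum_of_subset_of_nonneg
  · intro w hw
    rcases Finset.mem_image.mp hw with ⟨p, hp, rfl⟩
    exact joinw_mem_bset (Finset.mem_product.mp hp).1 (Finset.mem_product.mp hp).2
  · intro _ _ _
    exact (Real.exp_pos _).le

end SRW
namespace SRW

/-! ### glue (three-argument join at a cut point) -/

def glue (m c : ℕ) (hc : c ≤ m) (u : Fin c → Bool) (v : Fin (m - c) → Bool) : Fin m → Bool :=
  fun i => if h : (i : ℕ) < c then u ⟨i, h⟩ else v ⟨(i : ℕ) - c, by have := i.isLt; omega⟩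

lemma walkPos_glue_left (m c : ℕ) (hc : c ≤ m) (u : Fin c → Bool) (v : Fin (m - c) → Bool) :
    ∀ t, t ≤ c → walkPos m (glue m c hc u v) t = walkPos c u t := by
  intro t
  induction t with
  | zero => intro _; simp [walkPos_zero]
  | succ t ih =>
      intro ht
      have ht' : t < c := by omega
      rw [walkPos_succ, ih (by omega), walkPos_succ, dif_pos ht', dif_pos (show t < m by omega)]
      have : glue m c hc u v ⟨t, by omega⟩ = u ⟨t, ht'⟩ := dif_pos ht'
      rw [this]

lemma walkPos_glue_right (m c : ℕ) (hc : c ≤ m) (u : Fin c → Bool) (v : Fin (m - c) → Bool) :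
    ∀ t, t ≤ m - c →
      walkPos m (glue m c hc u v) (c + t) = walkPos c u c + walkPos (m - c) v t := by
  intro t
  induction t with
  | zero =>
      intro _
      rw [add_zero, walkPos_glue_left m c hc u v c le_rfl, walkPos_zero, add_zero]
  | succ t ih =>
      intro ht
      have ht' : t < m - c := by omega
      have e1 : c + (t + 1) = (c + t) + 1 := by ring
      rw [e1, walkPos_succ, ih (by omega), walkPos_succ, dif_pos ht',
        dif_pos (show c + t < m by omega)]
      have h2 : ¬ ((c + t : ℕ) < c) := by omega
      have : glue m c hc u v ⟨c + t, by omega⟩ = v ⟨t, ht'⟩ := by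
        simp only [glue, dif_neg h2, Nat.add_sub_cancel_left]
      rw [this]; ring

/-! ### counting bridges -/

noncomputable def bcard (m : ℕ) : ℕ := (bset m).card

lemma walkPos_full (m : ℕ) (w : Fin m → Bool) :
    walkPos m w m = 2 * ((Finset.univ.filter (fun j => w j = true)).card : ℤ) - m := by
  unfold walkPos
  rw [Finset.sum_congr rfl (fun (j : Fin m) _ => if_pos j.isLt)]
  rw [Finset.sum_ite]
  simp only [Finset.sum_const, nsmul_eq_mul, mul_one, mul_neg]
  have hT : (Finset.univ.filter (fun j => w j = true)).card
      + (Finset.univ.filter (fun j => ¬ (w j = true))).card = m := by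
    rw [Finset.card_filter_add_card_filter_not, Finset.card_univ, Fintype.card_fin]
  omega

lemma mem_bset_iff (m : ℕ) (w : Fin m → Bool) :
    w ∈ bset m ↔ 2 * (Finset.univ.filter (fun j => w j = true)).card = m := by
  unfold bset
  simp only [Finset.mem_filter, Finset.mem_univ, true_and]
  rw [walkPos_full]
  constructor
  · intro h; omega
  · intro h; omega

lemma even_of_mem_bset {m : ℕ} {w : Fin m → Bool} (h : w ∈ bset m) : m % 2 = 0 := by
  rw [mem_bset_iff] at h; omega

lemma bcard_eq_centralBinom (j : ℕ) : bcard (2 * j) = Nat.centralBinom j := by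
  unfold bcard Nat.centralBinom
  have h1 : (Finset.powersetCard j (Finset.univ : Finset (Fin (2 * j)))).card
      = (2 * j).choose j := by
    rw [Finset.card_powersetCard, Finset.card_univ, Fintype.card_fin]
  rw [← h1]
  refine Finset.card_bij' (fun w _ => Finset.univ.filter (fun i => w i = true))
      (fun S _ => fun i => decide (i ∈ S)) ?hi ?hj ?left ?right
  case hi =>
    intro w hw
    beta_reduce
    rw [Finset.mem_powersetCard]
    refine ⟨Finset.subset_univ _, ?_⟩
    rw [mem_bset_iff] at hw
    omega
  case hj =>
    intro S hS
    beta_reduce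
    rw [Finset.mem_powersetCard] at hS
    rw [mem_bset_iff]
    have : Finset.univ.filter (fun i => (decide (i ∈ S)) = true) = S := by
      ext i; simp
    rw [this]
    omega
  case left =>
    intro w hw
    funext i
    beta_reduce
    simp [Finset.mem_filter]
  case right =>
    intro S hS
    beta_reduce
    ext i; simp

lemma bcard_pos (j : ℕ) : 0 < bcard (2 * j) := by
  rw [bcard_eq_centralBinom]; exact Nat.centralBinom_pos j

lemma card_le_Qp {β : ℝ} (hβ : 0 ≤ β) (m : ℕ) : (bcard m : ℝ) ≤ Qp β m := by
  unfold Qp bcard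
  have h0 : ((bset m).card : ℝ) = ∑ _w ∈ bset m, (1 : ℝ) := by
    rw [Finset.sum_const, nsmul_eq_mul, mul_one]
  rw [h0]
  apply Finset.sum_le_sum
  intro w _
  rw [show (1 : ℝ) = Real.exp 0 from (Real.exp_zero).symm]
  apply Real.exp_le_exp.mpr
  positivity

lemma Qp_pos {β : ℝ} (hβ : 0 ≤ β) (j : ℕ) : 0 < Qp β (2 * j) := by
  calc (0 : ℝ) < (bcard (2 * j) : ℝ) := by exact_mod_cast bcard_pos j
    _ ≤ Qp β (2 * j) := card_le_Qp hβ _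

/-- number of bridges of length `m` vanishing at `c` -/
lemma card_zero_at (m c : ℕ) (hc : c ≤ m) :
    ((bset m).filter (fun w => walkPos m w c = 0)).card = bcard c * bcard (m - c) := by
  classical
  rw [show bcard c * bcard (m - c) = ((bset c) ×ˢ (bset (m - c))).card by
    rw [Finset.card_product]; rfl]
  have hsub1 : ∀ i : ℕ, i < c → 0 + i < m := by omega
  refine Finset.card_bij'
      (fun w _ => (subw m 0 c (by omega) w, subw m c (m - c) (by omega) w))
      (fun p _ => glue m c hc p.1 p.2) ?hi ?hj ?left ?right
  case hi =>
    intro w hw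
    beta_reduce
    simp only [Finset.mem_filter] at hw
    have hwb : walkPos m w m = 0 := by
      have := hw.1
      unfold bset at this
      simpa using this
    rw [Finset.mem_product]
    constructor
    · rw [show subw m 0 c (by omega) w ∈ bset c ↔ walkPos c (subw m 0 c (by omega) w) c = 0
        from by unfold bset; simp]
      rw [walkPos_subw m 0 c (by omega) w c le_rfl, Nat.zero_add, walkPos_zero, hw.2, sub_zero]
    · rw [show subw m c (m - c) (by omega) w ∈ bset (m - c)
          ↔ walkPos (m - c) (subw m c (m - c) (by omega) w) (m - c) = 0
        from by unfold bset; simp]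
      rw [walkPos_subw m c (m - c) (by omega) w (m - c) le_rfl,
        show c + (m - c) = m by omega, hwb, hw.2, sub_zero]
  case hj =>
    intro p hp
    beta_reduce
    rw [Finset.mem_product] at hp
    have h1 : walkPos c p.1 c = 0 := by have := hp.1; unfold bset at this; simpa using this
    have h2 : walkPos (m - c) p.2 (m - c) = 0 := by
      have := hp.2; unfold bset at this; simpa using this
    simp only [Finset.mem_filter]
    constructor
    · unfold bset
      simp only [Finset.mem_filter, Finset.mem_univ, true_and]
      have e := walkPos_glue_right m c hc p.1 p.2 (m - c) le_rfl
      rw [show c + (m - c) = m from by omega] at e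
      rw [e, h1, h2, add_zero]
    · rw [walkPos_glue_left m c hc p.1 p.2 c le_rfl, h1]
  case left =>
    intro w hw
    funext i
    beta_reduce
    by_cases h : (i : ℕ) < c
    · have : glue m c hc (subw m 0 c (by omega) w) (subw m c (m - c) (by omega) w) i
          = subw m 0 c (by omega) w ⟨(i : ℕ), h⟩ := dif_pos h
      rw [this]
      show w ⟨0 + (i : ℕ), _⟩ = w i
      simp only [Nat.zero_add, Fin.eta]
    · have : glue m c hc (subw m 0 c (by omega) w) (subw m c (m - c) (by omega) w) i
          = subw m c (m - c) (by omega) w ⟨(i : ℕ) - c, by have := i.isLt; omega⟩ := dif_neg h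
      rw [this]
      show w ⟨c + ((i : ℕ) - c), _⟩ = w i
      simp only [Nat.add_sub_cancel' (le_of_not_gt h), Fin.eta]
  case right =>
    intro p hp
    beta_reduce
    have e1 : subw m 0 c (by omega) (glue m c hc p.1 p.2) = p.1 := by
      funext i
      show glue m c hc p.1 p.2 ⟨0 + (i : ℕ), _⟩ = p.1 i
      have h : (0 + (i : ℕ)) < c := by have := i.isLt; omega
      have : glue m c hc p.1 p.2 ⟨0 + (i : ℕ), by omega⟩ = p.1 ⟨0 + (i : ℕ), h⟩ := dif_pos h
      rw [this]
      simp only [Nat.zero_add, Fin.eta]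
    have e2 : subw m c (m - c) (by omega) (glue m c hc p.1 p.2) = p.2 := by
      funext i
      show glue m c hc p.1 p.2 ⟨c + (i : ℕ), _⟩ = p.2 i
      have h : ¬ ((c + (i : ℕ)) < c) := by omega
      have : glue m c hc p.1 p.2 ⟨c + (i : ℕ), by have := i.isLt; omega⟩
          = p.2 ⟨c + (i : ℕ) - c, by have := i.isLt; omega⟩ := dif_neg h
      rw [this]
      simp only [Nat.add_sub_cancel_left, Fin.eta]
    rw [e1, e2]

/-- total zero count over all bridges, lower bound -/
lemma sum_zcount_ge (k : ℕ) :
    ∑ j ∈ Finset.Icc 1 (k - 1), bcard (2 * j) * bcard (2 * k - 2 * j)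
      ≤ ∑ w ∈ bset (2 * k), zcount (2 * k) w := by
  classical
  have hswap : ∑ w ∈ bset (2 * k), zcount (2 * k) w
      = ∑ t ∈ Finset.Icc 1 (2 * k - 1),
          ((bset (2 * k)).filter (fun w => walkPos (2 * k) w t = 0)).card := by
    unfold zcount
    have h1 : ∀ w, ((Finset.Icc 1 (2 * k - 1)).filter
        (fun t => walkPos (2 * k) w t = 0)).card
        = ∑ t ∈ Finset.Icc 1 (2 * k - 1), if walkPos (2 * k) w t = 0 then 1 else 0 := by
      intro w; rw [Finset.card_filter]
    rw [Finset.sum_congr rfl (fun w _ => h1 w), Finset.sum_comm]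
    apply Finset.sum_congr rfl
    intro t _
    rw [Finset.card_filter]
  rw [hswap]
  have himg : ∑ j ∈ Finset.Icc 1 (k - 1), bcard (2 * j) * bcard (2 * k - 2 * j)
      = ∑ t ∈ (Finset.Icc 1 (k - 1)).image (fun j => 2 * j),
          ((bset (2 * k)).filter (fun w => walkPos (2 * k) w t = 0)).card := by
    rw [Finset.sum_image (fun a _ b _ h => by omega)]
    apply Finset.sum_congr rfl
    intro j hj
    rw [Finset.mem_Icc] at hj
    rw [card_zero_at (2 * k) (2 * j) (by omega)]
  rw [himg]
  apply Finset.sum_le_sum_of_subset_of_nonneg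
  · intro t ht
    rcases Finset.mem_image.mp ht with ⟨j, hj, rfl⟩
    rw [Finset.mem_Icc] at hj ⊢
    omega
  · intro _ _ _; positivity

end SRW
namespace SRW

/-! ### real inequalities for central binomial coefficients -/

lemma cb_lower (j : ℕ) (hj : 1 ≤ j) :
    (4 : ℝ) ^ j ≤ 2 * Real.sqrt j * (Nat.centralBinom j : ℝ) := by
  induction j, hj using Nat.le_induction with
  | base =>
      simp only [Nat.cast_one, Real.sqrt_one, pow_one]
      rw [Nat.centralBinom]
      norm_num
  | succ j hj ih =>
      have hcbR : ((j : ℝ) + 1) * (Nat.centralBinom (j + 1) : ℝ)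
          = 2 * (2 * (j : ℝ) + 1) * (Nat.centralBinom j : ℝ) := by
        exact_mod_cast Nat.succ_mul_centralBinom_succ j
      have ha : Real.sqrt j ^ 2 = (j : ℝ) := Real.sq_sqrt (by positivity)
      have hb : Real.sqrt ((j : ℝ) + 1) ^ 2 = (j : ℝ) + 1 := Real.sq_sqrt (by positivity)
      have ha0 : 0 ≤ Real.sqrt j := Real.sqrt_nonneg _
      have hb0 : 0 ≤ Real.sqrt ((j : ℝ) + 1) := Real.sqrt_nonneg _
      have hc0 : (0 : ℝ) < (Nat.centralBinom j : ℝ) := by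
        exact_mod_cast Nat.centralBinom_pos j
      have hj0 : (0 : ℝ) ≤ (j : ℝ) := Nat.cast_nonneg j
      have key : 2 * Real.sqrt j * ((j : ℝ) + 1)
          ≤ Real.sqrt ((j : ℝ) + 1) * (2 * (j : ℝ) + 1) := by
        apply le_of_pow_le_pow_left₀ two_ne_zero (by positivity)
        have e : (2 * Real.sqrt j * ((j : ℝ) + 1)) ^ 2 = 4 * (j : ℝ) * ((j : ℝ) + 1) ^ 2 := by
          rw [mul_pow, mul_pow, ha]; ring
        have e' : (Real.sqrt ((j : ℝ) + 1) * (2 * (j : ℝ) + 1)) ^ 2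
            = ((j : ℝ) + 1) * (2 * (j : ℝ) + 1) ^ 2 := by
          rw [mul_pow, hb]
        rw [e, e']
        nlinarith [hj0]
      have h2 : (8 * Real.sqrt j * (Nat.centralBinom j : ℝ)) * ((j : ℝ) + 1)
          ≤ (2 * Real.sqrt ((j : ℝ) + 1) * (Nat.centralBinom (j + 1) : ℝ)) * ((j : ℝ) + 1) := by
        have e1 : (2 * Real.sqrt ((j : ℝ) + 1) * (Nat.centralBinom (j + 1) : ℝ)) * ((j : ℝ) + 1)
            = 2 * Real.sqrt ((j : ℝ) + 1) * (((j : ℝ) + 1) * (Nat.centralBinom (j + 1) : ℝ)) := by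
          ring
        rw [e1, hcbR]
        nlinarith [key, hc0]
      have h3 : 8 * Real.sqrt j * (Nat.centralBinom j : ℝ)
          ≤ 2 * Real.sqrt ((j : ℝ) + 1) * (Nat.centralBinom (j + 1) : ℝ) :=
        le_of_mul_le_mul_right h2 (by positivity)
      calc (4 : ℝ) ^ (j + 1) = 4 * 4 ^ j := by ring
        _ ≤ 4 * (2 * Real.sqrt j * (Nat.centralBinom j : ℝ)) := by linarith
        _ = 8 * Real.sqrt j * (Nat.centralBinom j : ℝ) := by ring
        _ ≤ 2 * Real.sqrt ((j : ℝ) + 1) * (Nat.centralBinom (j + 1) : ℝ) := h3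
        _ = 2 * Real.sqrt ((j : ℕ) + 1 : ℕ) * (Nat.centralBinom (j + 1) : ℝ) := by
            push_cast; ring

lemma cb_upper (k : ℕ) :
    (Nat.centralBinom k : ℝ) * Real.sqrt (3 * (k : ℝ) + 1) ≤ 4 ^ k := by
  induction k with
  | zero =>
      simp only [Nat.cast_zero, mul_zero, zero_add, Real.sqrt_one, pow_zero]
      rw [Nat.centralBinom]
      norm_num
  | succ k ih =>
      have hcbR : ((k : ℝ) + 1) * (Nat.centralBinom (k + 1) : ℝ)
          = 2 * (2 * (k : ℝ) + 1) * (Nat.centralBinom k : ℝ) := by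
        exact_mod_cast Nat.succ_mul_centralBinom_succ k
      have ha : Real.sqrt (3 * (k : ℝ) + 1) ^ 2 = 3 * (k : ℝ) + 1 :=
        Real.sq_sqrt (by positivity)
      have hb : Real.sqrt (3 * (k : ℝ) + 4) ^ 2 = 3 * (k : ℝ) + 4 :=
        Real.sq_sqrt (by positivity)
      have ha0 : 0 ≤ Real.sqrt (3 * (k : ℝ) + 1) := Real.sqrt_nonneg _
      have hb0 : 0 ≤ Real.sqrt (3 * (k : ℝ) + 4) := Real.sqrt_nonneg _
      have hc0 : (0 : ℝ) < (Nat.centralBinom k : ℝ) := by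
        exact_mod_cast Nat.centralBinom_pos k
      have hk0 : (0 : ℝ) ≤ (k : ℝ) := Nat.cast_nonneg k
      have key : (2 * (k : ℝ) + 1) * Real.sqrt (3 * (k : ℝ) + 4)
          ≤ 2 * ((k : ℝ) + 1) * Real.sqrt (3 * (k : ℝ) + 1) := by
        apply le_of_pow_le_pow_left₀ two_ne_zero (by positivity)
        have e : ((2 * (k : ℝ) + 1) * Real.sqrt (3 * (k : ℝ) + 4)) ^ 2
            = (2 * (k : ℝ) + 1) ^ 2 * (3 * (k : ℝ) + 4) := by
          rw [mul_pow, hb]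
        have e' : (2 * ((k : ℝ) + 1) * Real.sqrt (3 * (k : ℝ) + 1)) ^ 2
            = 4 * ((k : ℝ) + 1) ^ 2 * (3 * (k : ℝ) + 1) := by
          rw [mul_pow, mul_pow, ha]; ring
        rw [e, e']
        nlinarith [hk0]
      have h2 : ((Nat.centralBinom (k + 1) : ℝ) * Real.sqrt (3 * (k : ℝ) + 4)) * ((k : ℝ) + 1)
          ≤ (4 * (Nat.centralBinom k : ℝ) * Real.sqrt (3 * (k : ℝ) + 1)) * ((k : ℝ) + 1) := by
        have e1 : ((Nat.centralBinom (k + 1) : ℝ) * Real.sqrt (3 * (k : ℝ) + 4)) * ((k : ℝ) + 1)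
            = (((k : ℝ) + 1) * (Nat.centralBinom (k + 1) : ℝ)) * Real.sqrt (3 * (k : ℝ) + 4) := by
          ring
        rw [e1, hcbR]
        nlinarith [key, hc0]
      have h3 : (Nat.centralBinom (k + 1) : ℝ) * Real.sqrt (3 * (k : ℝ) + 4)
          ≤ 4 * (Nat.centralBinom k : ℝ) * Real.sqrt (3 * (k : ℝ) + 1) :=
        le_of_mul_le_mul_right h2 (by positivity)
      have e2 : 3 * ((k : ℝ) + 1) + 1 = 3 * (k : ℝ) + 4 := by ring
      calc (Nat.centralBinom (k + 1) : ℝ) * Real.sqrt (3 * ((k + 1 : ℕ) : ℝ) + 1)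
          = (Nat.centralBinom (k + 1) : ℝ) * Real.sqrt (3 * (k : ℝ) + 4) := by
            push_cast; rw [e2]
        _ ≤ 4 * (Nat.centralBinom k : ℝ) * Real.sqrt (3 * (k : ℝ) + 1) := h3
        _ ≤ 4 * 4 ^ k := by nlinarith [ih]
        _ = 4 ^ (k + 1) := by ring

lemma sum_inv_sqrt (m : ℕ) :
    Real.sqrt m ≤ ∑ j ∈ Finset.Icc 1 m, 1 / Real.sqrt j := by
  induction m with
  | zero => simp
  | succ m ih =>
      rw [Finset.sum_Icc_succ_top (by omega)]
      have hb : Real.sqrt ((m : ℝ) + 1) ^ 2 = (m : ℝ) + 1 := Real.sq_sqrt (by positivity)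
      have hbpos : 0 < Real.sqrt ((m : ℝ) + 1) := Real.sqrt_pos.mpr (by positivity)
      have h1 : (m : ℝ) ≤ Real.sqrt m * Real.sqrt ((m : ℝ) + 1) := by
        rw [← Real.sqrt_mul (Nat.cast_nonneg m)]
        calc (m : ℝ) = Real.sqrt ((m : ℝ) ^ 2) := (Real.sqrt_sq (Nat.cast_nonneg m)).symm
          _ ≤ Real.sqrt ((m : ℝ) * ((m : ℝ) + 1)) := by
              apply Real.sqrt_le_sqrt; nlinarith [Nat.cast_nonneg (α := ℝ) m]
      have h2 : Real.sqrt ((m : ℝ) + 1) - Real.sqrt m ≤ 1 / Real.sqrt ((m : ℝ) + 1) := by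
        rw [le_div_iff₀ hbpos]
        nlinarith [h1, hb]
      have hcast : Real.sqrt ((m + 1 : ℕ) : ℝ) = Real.sqrt ((m : ℝ) + 1) := by push_cast; rfl
      have hcast2 : (1 : ℝ) / Real.sqrt ((m + 1 : ℕ) : ℝ) = 1 / Real.sqrt ((m : ℝ) + 1) := by
        rw [hcast]
      rw [hcast]
      linarith

/-! ### Jensen's inequality for the partition function -/

lemma Qp_ge_exp_avg (β : ℝ) (m : ℕ) (hB : 0 < bcard m) :
    (bcard m : ℝ) * Real.exp (β * (∑ w ∈ bset m, (zcount m w : ℝ)) / (bcard m : ℝ))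
      ≤ Qp β m := by
  have hBR : (0 : ℝ) < (bcard m : ℝ) := by exact_mod_cast hB
  have hjen := convexOn_exp.map_sum_le (t := bset m)
      (w := fun _ => 1 / (bcard m : ℝ)) (p := fun w => β * (zcount m w : ℝ))
      (fun _ _ => by positivity)
      (by
        rw [Finset.sum_const, nsmul_eq_mul, mul_one_div]
        exact div_self (ne_of_gt hBR))
      (fun _ _ => Set.mem_univ _)
  have e1 : ∑ w ∈ bset m, (1 / (bcard m : ℝ)) • (β * (zcount m w : ℝ))
      = β * (∑ w ∈ bset m, (zcount m w : ℝ)) / (bcard m : ℝ) := by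
    simp only [smul_eq_mul]
    rw [← Finset.mul_sum, ← Finset.mul_sum]
    ring
  have e2 : ∑ w ∈ bset m, (1 / (bcard m : ℝ)) • Real.exp (β * (zcount m w : ℝ))
      = Qp β m / (bcard m : ℝ) := by
    simp only [smul_eq_mul]
    rw [← Finset.mul_sum]
    unfold Qp
    ring
  rw [e1, e2] at hjen
  calc (bcard m : ℝ) * Real.exp (β * (∑ w ∈ bset m, (zcount m w : ℝ)) / (bcard m : ℝ))
      ≤ (bcard m : ℝ) * (Qp β m / (bcard m : ℝ)) := by
        apply mul_le_mul_of_nonneg_left hjen hBR.le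
    _ = Qp β m := by field_simp

/-! ### lower bound on the partition function -/

lemma Qp_lower {β : ℝ} (hβ : 0 ≤ β) (k : ℕ) (hk : 1 ≤ k) :
    (4 : ℝ) ^ k * Real.exp (β * Real.sqrt ((k : ℝ) - 1) / 4)
      ≤ 2 * Real.sqrt k * Qp β (2 * k) := by
  have hBpos : 0 < bcard (2 * k) := bcard_pos k
  have hBR : (0 : ℝ) < (bcard (2 * k) : ℝ) := by exact_mod_cast hBpos
  have hsk : (1 : ℝ) ≤ Real.sqrt k := by
    rw [show (1 : ℝ) = Real.sqrt 1 from Real.sqrt_one.symm]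
    apply Real.sqrt_le_sqrt
    exact_mod_cast hk
  -- average zero count is at least sqrt(k-1)/4
  have havg : (bcard (2 * k) : ℝ) * (Real.sqrt ((k : ℝ) - 1) / 4)
      ≤ ∑ w ∈ bset (2 * k), (zcount (2 * k) w : ℝ) := by
    have hsum := sum_zcount_ge k
    -- lower bound each term of the LHS sum of sum_zcount_ge
    have hterm : ∀ j ∈ Finset.Icc 1 (k - 1),
        (bcard (2 * k) : ℝ) * (1 / (4 * Real.sqrt j))
          ≤ (bcard (2 * j) * bcard (2 * k - 2 * j) : ℕ) := by
      intro j hj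
      rw [Finset.mem_Icc] at hj
      have hj1 : 1 ≤ j := hj.1
      have hjk : j ≤ k - 1 := hj.2
      have hkj1 : 1 ≤ k - j := by omega
      have e1 : bcard (2 * k - 2 * j) = Nat.centralBinom (k - j) := by
        rw [show 2 * k - 2 * j = 2 * (k - j) by omega, bcard_eq_centralBinom]
      have e2 : bcard (2 * j) = Nat.centralBinom j := bcard_eq_centralBinom j
      have e3 : bcard (2 * k) = Nat.centralBinom k := bcard_eq_centralBinom k
      push_cast [e1, e2, e3]
      set cbj := (Nat.centralBinom j : ℝ)
      set cbkj := (Nat.centralBinom (k - j) : ℝ)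
      set cbk := (Nat.centralBinom k : ℝ)
      have hcbj := cb_lower j hj1
      have hcbkj := cb_lower (k - j) hkj1
      have hcbk := cb_upper k
      have hsj : 0 < Real.sqrt (j : ℝ) := Real.sqrt_pos.mpr (by exact_mod_cast hj1)
      have hskj : 0 < Real.sqrt ((k - j : ℕ) : ℝ) := Real.sqrt_pos.mpr (by
        exact_mod_cast hkj1)
      have hsqk : 0 < Real.sqrt (3 * (k : ℝ) + 1) := Real.sqrt_pos.mpr (by positivity)
      have hmono : Real.sqrt ((k - j : ℕ) : ℝ) ≤ Real.sqrt (3 * (k : ℝ) + 1) := by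
        apply Real.sqrt_le_sqrt
        have h9 : ((k - j : ℕ) : ℝ) ≤ (k : ℝ) := by
          exact_mod_cast Nat.cast_le.mpr (Nat.sub_le k j)
        linarith
      have hcb1 : (0 : ℝ) < cbj := by
        unfold cbj; exact_mod_cast Nat.centralBinom_pos j
      have hcb2 : (0 : ℝ) < cbkj := by
        unfold cbkj; exact_mod_cast Nat.centralBinom_pos (k - j)
      have hcbk0 : (0 : ℝ) ≤ cbk := by positivity
      have hsplit : (4 : ℝ) ^ k = 4 ^ j * 4 ^ (k - j) := by
        rw [← pow_add]
        congr 1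
        omega
      have s1 : cbk * Real.sqrt (3 * (k : ℝ) + 1)
          ≤ (2 * Real.sqrt (j : ℝ) * cbj) * (2 * Real.sqrt ((k - j : ℕ) : ℝ) * cbkj) := by
        calc cbk * Real.sqrt (3 * (k : ℝ) + 1) ≤ 4 ^ k := hcbk
          _ = 4 ^ j * 4 ^ (k - j) := hsplit
          _ ≤ _ := mul_le_mul hcbj hcbkj (by positivity) (by positivity)
      have s4 : cbk * Real.sqrt (3 * (k : ℝ) + 1)
          ≤ (4 * Real.sqrt (j : ℝ) * cbj * cbkj) * Real.sqrt (3 * (k : ℝ) + 1) := by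
        calc cbk * Real.sqrt (3 * (k : ℝ) + 1)
            ≤ (2 * Real.sqrt (j : ℝ) * cbj) * (2 * Real.sqrt ((k - j : ℕ) : ℝ) * cbkj) := s1
          _ = (4 * Real.sqrt (j : ℝ) * cbj * cbkj) * Real.sqrt ((k - j : ℕ) : ℝ) := by ring
          _ ≤ _ := by
              apply mul_le_mul_of_nonneg_left hmono
              positivity
      have s5 : cbk ≤ 4 * Real.sqrt (j : ℝ) * cbj * cbkj := le_of_mul_le_mul_right s4 hsqk
      rw [mul_one_div, div_le_iff₀ (by positivity)]
      nlinarith [s5]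
    -- now assemble the average bound
    have hcast : Real.sqrt ((k - 1 : ℕ) : ℝ) = Real.sqrt ((k : ℝ) - 1) := by
      congr 1
      push_cast [Nat.cast_sub hk]
      ring
    calc (bcard (2 * k) : ℝ) * (Real.sqrt ((k : ℝ) - 1) / 4)
        = ((bcard (2 * k) : ℝ) / 4) * Real.sqrt ((k - 1 : ℕ) : ℝ) := by rw [hcast]; ring
      _ ≤ ((bcard (2 * k) : ℝ) / 4) * ∑ j ∈ Finset.Icc 1 (k - 1), 1 / Real.sqrt (j : ℝ) := by
          apply mul_le_mul_of_nonneg_left (sum_inv_sqrt (k - 1)) (by positivity)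
      _ = ∑ j ∈ Finset.Icc 1 (k - 1), (bcard (2 * k) : ℝ) * (1 / (4 * Real.sqrt (j : ℝ))) := by
          rw [Finset.mul_sum]
          apply Finset.sum_congr rfl
          intro j hj
          have : Real.sqrt (j : ℝ) ≠ 0 := by
            rw [Finset.mem_Icc] at hj
            have := Real.sqrt_pos.mpr (show (0:ℝ) < (j:ℝ) by exact_mod_cast hj.1)
            linarith
          field_simp
      _ ≤ ∑ j ∈ Finset.Icc 1 (k - 1), ((bcard (2 * j) * bcard (2 * k - 2 * j) : ℕ) : ℝ) :=
          Finset.sum_le_sum hterm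
      _ = ((∑ j ∈ Finset.Icc 1 (k - 1), bcard (2 * j) * bcard (2 * k - 2 * j) : ℕ) : ℝ) := by
          rw [Nat.cast_sum]
      _ ≤ ((∑ w ∈ bset (2 * k), zcount (2 * k) w : ℕ) : ℝ) := by exact_mod_cast hsum
      _ = ∑ w ∈ bset (2 * k), (zcount (2 * k) w : ℝ) := by rw [Nat.cast_sum]
  -- conclude via Jensen
  have hjensen := Qp_ge_exp_avg β (2 * k) hBpos
  have h5 : Real.sqrt ((k : ℝ) - 1) / 4
      ≤ (∑ w ∈ bset (2 * k), (zcount (2 * k) w : ℝ)) / (bcard (2 * k) : ℝ) := by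
    rw [le_div_iff₀ hBR]
    nlinarith [havg]
  have h6 : β * Real.sqrt ((k : ℝ) - 1) / 4
      ≤ β * (∑ w ∈ bset (2 * k), (zcount (2 * k) w : ℝ)) / (bcard (2 * k) : ℝ) := by
    rw [mul_div_assoc, mul_div_assoc]
    exact mul_le_mul_of_nonneg_left h5 hβ
  have h7 : (4 : ℝ) ^ k ≤ 2 * Real.sqrt k * (bcard (2 * k) : ℝ) := by
    rw [bcard_eq_centralBinom]
    exact cb_lower k hk
  calc (4 : ℝ) ^ k * Real.exp (β * Real.sqrt ((k : ℝ) - 1) / 4)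
      ≤ (2 * Real.sqrt k * (bcard (2 * k) : ℝ)) * Real.exp (β * Real.sqrt ((k : ℝ) - 1) / 4) :=
        mul_le_mul_of_nonneg_right h7 (Real.exp_pos _).le
    _ ≤ (2 * Real.sqrt k * (bcard (2 * k) : ℝ)) *
          Real.exp (β * (∑ w ∈ bset (2 * k), (zcount (2 * k) w : ℝ)) / (bcard (2 * k) : ℝ)) := by
        apply mul_le_mul_of_nonneg_left (Real.exp_le_exp.mpr h6) (by positivity)
    _ = 2 * Real.sqrt k * ((bcard (2 * k) : ℝ) *
          Real.exp (β * (∑ w ∈ bset (2 * k), (zcount (2 * k) w : ℝ)) / (bcard (2 * k) : ℝ))) := by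
        ring
    _ ≤ 2 * Real.sqrt k * Qp β (2 * k) := by
        apply mul_le_mul_of_nonneg_left hjensen (by positivity)

end SRW
namespace SRW

/-! ### exponential decay of the inverse partition function -/

lemma Qp_pow_le {β : ℝ} (hβ : 0 ≤ β) (k r : ℕ) :
    ∀ q : ℕ, Qp β (2 * k) ^ q * Qp β (2 * r) ≤ Qp β (2 * (k * q + r)) := by
  intro q
  induction q with
  | zero => simp
  | succ q ih =>
      have e : 2 * (k * (q + 1) + r) = 2 * k + 2 * (k * q + r) := by ring
      rw [e]
      calc Qp β (2 * k) ^ (q + 1) * Qp β (2 * r)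
          = Qp β (2 * k) * (Qp β (2 * k) ^ q * Qp β (2 * r)) := by ring
        _ ≤ Qp β (2 * k) * Qp β (2 * (k * q + r)) :=
            mul_le_mul_of_nonneg_left ih (Qp_nonneg _ _)
        _ ≤ Qp β (2 * k + 2 * (k * q + r)) := Qp_supermul hβ _ _

lemma four_pow_le_decay {β : ℝ} (hβ : 0 ≤ β) {k : ℕ} (hk : 1 ≤ k)
    (hgood : Real.exp 1 * 4 ^ k ≤ Qp β (2 * k)) (j : ℕ) :
    (4 : ℝ) ^ j ≤ 2 * Real.sqrt k * Real.exp 1 * Real.exp (-(j : ℝ) / k) * Qp β (2 * j) := by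
  have hsk : (1 : ℝ) ≤ Real.sqrt k := by
    rw [show (1 : ℝ) = Real.sqrt 1 from Real.sqrt_one.symm]
    apply Real.sqrt_le_sqrt
    exact_mod_cast hk
  set q := j / k with hq
  set r := j % k with hr
  have hjqr : k * q + r = j := Nat.div_add_mod j k
  have hrk : r < k := Nat.mod_lt j hk
  have h4r : (4 : ℝ) ^ r ≤ 2 * Real.sqrt k * Qp β (2 * r) := by
    rcases Nat.eq_zero_or_pos r with h0 | hpos
    · rw [h0, Qp_zero]
      norm_num
      linarith
    · calc (4 : ℝ) ^ r ≤ 2 * Real.sqrt r * (Nat.centralBinom r : ℝ) := cb_lower r hpos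
        _ ≤ 2 * Real.sqrt k * Qp β (2 * r) := by
            have hm : Real.sqrt (r : ℝ) ≤ Real.sqrt (k : ℝ) := by
              apply Real.sqrt_le_sqrt
              exact_mod_cast hrk.le
            have hc : ((Nat.centralBinom r : ℕ) : ℝ) ≤ Qp β (2 * r) := by
              rw [← bcard_eq_centralBinom]
              exact card_le_Qp hβ _
            apply mul_le_mul (by linarith [Real.sqrt_nonneg (r : ℝ)]) hc (by positivity)
            positivity
  have hq1 : (Real.exp 1 * 4 ^ k) ^ q ≤ Qp β (2 * k) ^ q :=
    pow_le_pow_left₀ (by positivity) hgood q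
  have hcomb : Real.exp 1 ^ q * (4 : ℝ) ^ j ≤ 2 * Real.sqrt k * Qp β (2 * j) := by
    have e1 : Real.exp 1 ^ q * (4 : ℝ) ^ j = (Real.exp 1 * 4 ^ k) ^ q * 4 ^ r := by
      rw [← hjqr]
      rw [mul_pow, ← pow_mul]
      ring
    rw [e1]
    calc (Real.exp 1 * 4 ^ k) ^ q * 4 ^ r
        ≤ Qp β (2 * k) ^ q * (2 * Real.sqrt k * Qp β (2 * r)) := by
          apply mul_le_mul hq1 h4r (by positivity) (pow_nonneg (Qp_nonneg _ _) q)
      _ = 2 * Real.sqrt k * (Qp β (2 * k) ^ q * Qp β (2 * r)) := by ring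
      _ ≤ 2 * Real.sqrt k * Qp β (2 * (k * q + r)) := by
          apply mul_le_mul_of_nonneg_left (Qp_pow_le hβ k r q) (by positivity)
      _ = 2 * Real.sqrt k * Qp β (2 * j) := by rw [hjqr]
  -- now divide by e^q and use  -q ≤ 1 - j/k
  have hqreal : (j : ℝ) / k - 1 ≤ (q : ℝ) := by
    have hk0 : (0 : ℝ) < (k : ℝ) := by exact_mod_cast hk
    have hjR : (j : ℝ) = (k : ℝ) * (q : ℝ) + (r : ℝ) := by exact_mod_cast hjqr.symm
    have hrR : (r : ℝ) < (k : ℝ) := by exact_mod_cast hrk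
    have h2 : (j : ℝ) / k ≤ (q : ℝ) + 1 := by
      rw [div_le_iff₀ hk0]
      nlinarith
    linarith
  have hexp : Real.exp 1 ^ q = Real.exp (q : ℝ) := by
    rw [← Real.exp_nat_mul]
    norm_num
  have hfinal : (4 : ℝ) ^ j * Real.exp (q : ℝ) ≤
      2 * Real.sqrt k * Qp β (2 * j) := by
    rw [← hexp]; linarith [hcomb]
  have hmono : Real.exp (-(q : ℝ)) ≤ Real.exp 1 * Real.exp (-(j : ℝ) / k) := by
    rw [← Real.exp_add]
    apply Real.exp_le_exp.mpr
    have : -(j : ℝ) / k = -((j : ℝ) / k) := by ring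
    rw [this]
    linarith [hqreal]
  calc (4 : ℝ) ^ j = (4 : ℝ) ^ j * Real.exp (q : ℝ) * Real.exp (-(q : ℝ)) := by
        rw [mul_assoc, ← Real.exp_add]
        simp
    _ ≤ (2 * Real.sqrt k * Qp β (2 * j)) * Real.exp (-(q : ℝ)) := by
        apply mul_le_mul_of_nonneg_right hfinal (Real.exp_pos _).le
    _ ≤ (2 * Real.sqrt k * Qp β (2 * j)) * (Real.exp 1 * Real.exp (-(j : ℝ) / k)) := by
        apply mul_le_mul_of_nonneg_left hmono
        exact mul_nonneg (by positivity) (Qp_nonneg _ _)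
    _ = 2 * Real.sqrt k * Real.exp 1 * Real.exp (-(j : ℝ) / k) * Qp β (2 * j) := by ring

lemma exp_ge_sq_div_four {x : ℝ} (hx : 0 ≤ x) : x ^ 2 / 4 ≤ Real.exp x := by
  have h := Real.add_one_le_exp (x / 2)
  have e : Real.exp x = Real.exp (x / 2) * Real.exp (x / 2) := by
    rw [← Real.exp_add]; ring_nf
  nlinarith [Real.exp_pos (x / 2)]

/-- existence of a "good" block length -/
lemma exists_good {β : ℝ} (hβ : 0 < β) :
    ∃ k : ℕ, 1 ≤ k ∧ Real.exp 1 * 4 ^ k ≤ Qp β (2 * k) := by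
  obtain ⟨N, hNge⟩ := exists_nat_ge (max (max ((1024 : ℝ) / β ^ 2) ((8 : ℝ) / β)) 1024)
  have hN1 : (1024 : ℝ) / β ^ 2 ≤ (N : ℝ) :=
    le_trans (le_trans (le_max_left _ _) (le_max_left _ _)) hNge
  have hN2 : (8 : ℝ) / β ≤ (N : ℝ) :=
    le_trans (le_trans (le_max_right _ _) (le_max_left _ _)) hNge
  have hN3 : (1024 : ℝ) ≤ (N : ℝ) := le_trans (le_max_right _ _) hNge
  have hNpos : (0 : ℝ) < (N : ℝ) := by linarith
  have hu1 : (1 : ℝ) ≤ β * N / 8 := by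
    rw [div_le_iff₀ hβ] at hN2
    rw [le_div_iff₀ (by norm_num : (0:ℝ) < 8)]
    linarith
  have hu2 : 2 * ((N : ℝ) + 1) ≤ (β * N / 8) ^ 2 / 4 := by
    have h1 : (1024 : ℝ) ≤ β ^ 2 * N := by
      rw [div_le_iff₀ (by positivity)] at hN1
      linarith
    have h2 : (1024 : ℝ) * N ≤ β ^ 2 * N ^ 2 := by nlinarith
    nlinarith
  refine ⟨N ^ 2 + 1, by omega, ?_⟩
  have hkcast : ((N ^ 2 + 1 : ℕ) : ℝ) - 1 = (N : ℝ) ^ 2 := by push_cast; ring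
  have hsqrtk1 : Real.sqrt ((N ^ 2 + 1 : ℕ) : ℝ) ≤ (N : ℝ) + 1 := by
    rw [show ((N : ℝ) + 1) = Real.sqrt (((N : ℝ) + 1) ^ 2) from
      (Real.sqrt_sq (by positivity)).symm]
    apply Real.sqrt_le_sqrt
    push_cast
    nlinarith
  have hsqrtk2 : Real.sqrt (((N ^ 2 + 1 : ℕ) : ℝ) - 1) = (N : ℝ) := by
    rw [hkcast, Real.sqrt_sq (by positivity)]
  have hlow := Qp_lower hβ.le (N ^ 2 + 1) (by omega)
  have hexp : 2 * Real.sqrt ((N ^ 2 + 1 : ℕ) : ℝ) * Real.exp 1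
      ≤ Real.exp (β * (N : ℝ) / 4) := by
    have e1 : Real.exp (β * (N : ℝ) / 4)
        = Real.exp (β * (N : ℝ) / 8) * Real.exp (β * (N : ℝ) / 8) := by
      rw [← Real.exp_add]; ring_nf
    have h3 : Real.exp 1 ≤ Real.exp (β * (N : ℝ) / 8) := Real.exp_le_exp.mpr hu1
    have h4 : 2 * ((N : ℝ) + 1) ≤ Real.exp (β * (N : ℝ) / 8) := by
      calc 2 * ((N : ℝ) + 1) ≤ (β * N / 8) ^ 2 / 4 := hu2
        _ ≤ Real.exp (β * (N : ℝ) / 8) := exp_ge_sq_div_four (by positivity)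
    rw [e1]
    calc 2 * Real.sqrt ((N ^ 2 + 1 : ℕ) : ℝ) * Real.exp 1
        ≤ 2 * ((N : ℝ) + 1) * Real.exp 1 := by
          apply mul_le_mul_of_nonneg_right _ (Real.exp_pos _).le
          linarith
      _ ≤ Real.exp (β * (N : ℝ) / 8) * Real.exp (β * (N : ℝ) / 8) :=
          mul_le_mul h4 h3 (Real.exp_pos _).le (Real.exp_pos _).le
  have hsq_pos : 0 < Real.sqrt ((N ^ 2 + 1 : ℕ) : ℝ) := Real.sqrt_pos.mpr (by
    push_cast; positivity)
  have key : (2 * Real.sqrt ((N ^ 2 + 1 : ℕ) : ℝ)) * (Real.exp 1 * 4 ^ (N ^ 2 + 1))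
      ≤ (2 * Real.sqrt ((N ^ 2 + 1 : ℕ) : ℝ)) * Qp β (2 * (N ^ 2 + 1)) := by
    calc (2 * Real.sqrt ((N ^ 2 + 1 : ℕ) : ℝ)) * (Real.exp 1 * 4 ^ (N ^ 2 + 1))
        = (4 : ℝ) ^ (N ^ 2 + 1) * (2 * Real.sqrt ((N ^ 2 + 1 : ℕ) : ℝ) * Real.exp 1) := by
          ring
      _ ≤ (4 : ℝ) ^ (N ^ 2 + 1) * Real.exp (β * (N : ℝ) / 4) := by
          apply mul_le_mul_of_nonneg_left hexp (by positivity)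
      _ = (4 : ℝ) ^ (N ^ 2 + 1)
            * Real.exp (β * Real.sqrt (((N ^ 2 + 1 : ℕ) : ℝ) - 1) / 4) := by rw [hsqrtk2]
      _ ≤ 2 * Real.sqrt ((N ^ 2 + 1 : ℕ) : ℝ) * Qp β (2 * (N ^ 2 + 1)) := hlow
      _ = (2 * Real.sqrt ((N ^ 2 + 1 : ℕ) : ℝ)) * Qp β (2 * (N ^ 2 + 1)) := by ring
  exact le_of_mul_le_mul_left key (by positivity)

end SRW
namespace SRW

/-! ### splicing a window into a path -/

def splice (m a b : ℕ) (hab : a ≤ b) (hbm : b ≤ m) (s : Fin m → Bool)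
    (w : Fin (b - a) → Bool) : Fin m → Bool :=
  fun i => if h : a ≤ (i : ℕ) ∧ (i : ℕ) < b then w ⟨(i : ℕ) - a, by omega⟩ else s i

lemma walkPos_splice_left (m a b : ℕ) (hab : a ≤ b) (hbm : b ≤ m) (s : Fin m → Bool)
    (w : Fin (b - a) → Bool) :
    ∀ t, t ≤ a → walkPos m (splice m a b hab hbm s w) t = walkPos m s t := by
  intro t
  induction t with
  | zero => intro _; simp [walkPos_zero]
  | succ t ih =>
      intro ht
      rw [walkPos_succ, walkPos_succ, ih (by omega)]
      congr 1
      rcases Nat.lt_or_ge t m with h | h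
      · have hs : splice m a b hab hbm s w ⟨t, h⟩ = s ⟨t, h⟩ :=
          dif_neg (by simp only [not_and, not_lt]; omega)
        rw [dif_pos h, dif_pos h, hs]
      · rw [dif_neg (by omega), dif_neg (by omega)]

lemma walkPos_splice_mid (m a b : ℕ) (hab : a ≤ b) (hbm : b ≤ m) (s : Fin m → Bool)
    (w : Fin (b - a) → Bool) :
    ∀ t, t ≤ b - a → walkPos m (splice m a b hab hbm s w) (a + t)
      = walkPos m s a + walkPos (b - a) w t := by
  intro t
  induction t with
  | zero =>
      intro _
      rw [add_zero, walkPos_splice_left m a b hab hbm s w a le_rfl, walkPos_zero, add_zero]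
  | succ t ih =>
      intro ht
      have e1 : a + (t + 1) = (a + t) + 1 := by ring
      rw [e1, walkPos_succ, ih (by omega), walkPos_succ (b - a) w t,
        dif_pos (show t < b - a by omega), dif_pos (show a + t < m by omega)]
      have : splice m a b hab hbm s w ⟨a + t, by omega⟩
          = w ⟨t, by omega⟩ := by
        have hcond : a ≤ a + t ∧ a + t < b := by omega
        simp only [splice, dif_pos hcond, Nat.add_sub_cancel_left]
      rw [this]
      ring

lemma walkPos_splice_right (m a b : ℕ) (hab : a ≤ b) (hbm : b ≤ m) (s : Fin m → Bool)
    (w : Fin (b - a) → Bool) :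
    ∀ t, b ≤ t → walkPos m (splice m a b hab hbm s w) t
      = walkPos m s t - walkPos m s b + walkPos m s a + walkPos (b - a) w (b - a) := by
  intro t htb
  induction t, htb using Nat.le_induction with
  | base =>
      have h := walkPos_splice_mid m a b hab hbm s w (b - a) le_rfl
      rw [show a + (b - a) = b by omega] at h
      rw [h]
      ring
  | succ t htb ih =>
      rw [walkPos_succ, walkPos_succ, ih]
      have hstep : (if h : t < m then
            (if splice m a b hab hbm s w ⟨t, h⟩ then (1 : ℤ) else -1) else 0)
          = (if h : t < m then (if s ⟨t, h⟩ then (1 : ℤ) else -1) else 0) := by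
        rcases Nat.lt_or_ge t m with h | h
        · have hs : splice m a b hab hbm s w ⟨t, h⟩ = s ⟨t, h⟩ :=
            dif_neg (by simp only [not_and, not_lt]; omega)
          rw [dif_pos h, dif_pos h, hs]
        · rw [dif_neg (by omega), dif_neg (by omega)]
      rw [hstep]
      ring

end SRW
namespace SRW

/-! ### excursion events -/

noncomputable def eset (m a b : ℕ) : Finset (Fin m → Bool) :=
  (bset m).filter (fun s => walkPos m s a = 0 ∧ walkPos m s b = 0 ∧
    ∀ t, a < t → t < b → walkPos m s t ≠ 0)

lemma mem_eset {m a b : ℕ} {s : Fin m → Bool} :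
    s ∈ eset m a b ↔ walkPos m s m = 0 ∧ walkPos m s a = 0 ∧ walkPos m s b = 0 ∧
      ∀ t, a < t → t < b → walkPos m s t ≠ 0 := by
  unfold eset bset
  simp only [Finset.mem_filter, Finset.mem_univ, true_and]

lemma win_splice (m a b : ℕ) (hab : a ≤ b) (hbm : b ≤ m) (s : Fin m → Bool)
    (w : Fin (b - a) → Bool) :
    subw m a (b - a) (by omega) (splice m a b hab hbm s w) = w := by
  funext i
  have hi := i.isLt
  show splice m a b hab hbm s w ⟨a + (i : ℕ), by omega⟩ = w i
  have hcond : a ≤ a + (i : ℕ) ∧ a + (i : ℕ) < b := by omega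
  simp only [splice, dif_pos hcond, Nat.add_sub_cancel_left, Fin.eta]

lemma splice_win (m a b : ℕ) (hab : a ≤ b) (hbm : b ≤ m) (s : Fin m → Bool)
    (w : Fin (b - a) → Bool) :
    splice m a b hab hbm (splice m a b hab hbm s w) (subw m a (b - a) (by omega) s) = s := by
  funext i
  by_cases h : a ≤ (i : ℕ) ∧ (i : ℕ) < b
  · have e1 : splice m a b hab hbm (splice m a b hab hbm s w)
        (subw m a (b - a) (by omega) s) i
        = subw m a (b - a) (by omega) s ⟨(i : ℕ) - a, by have := i.isLt; omega⟩ := dif_pos h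
    rw [e1]
    show s ⟨a + ((i : ℕ) - a), _⟩ = s i
    simp only [Nat.add_sub_cancel' h.1, Fin.eta]
  · have e1 : splice m a b hab hbm (splice m a b hab hbm s w)
        (subw m a (b - a) (by omega) s) i = splice m a b hab hbm s w i := dif_neg h
    have e2 : splice m a b hab hbm s w i = s i := dif_neg h
    rw [e1, e2]

lemma win_mem_bset {m a b : ℕ} (hab : a ≤ b) (hbm : b ≤ m) {s : Fin m → Bool}
    (hs : s ∈ eset m a b) : subw m a (b - a) (by omega) s ∈ bset (b - a) := by
  rw [mem_eset] at hs
  unfold bset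
  simp only [Finset.mem_filter, Finset.mem_univ, true_and]
  rw [walkPos_subw m a (b - a) (by omega) s (b - a) le_rfl, show a + (b - a) = b by omega,
    hs.2.2.1, hs.2.1, sub_zero]

lemma splice_mem_bset {m a b : ℕ} (hab : a ≤ b) (hbm : b ≤ m) {s : Fin m → Bool}
    (hs : s ∈ eset m a b) {w : Fin (b - a) → Bool} (hw : w ∈ bset (b - a)) :
    splice m a b hab hbm s w ∈ bset m := by
  rw [mem_eset] at hs
  have hwb : walkPos (b - a) w (b - a) = 0 := by
    have := hw; unfold bset at this; simpa using this
  unfold bset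
  simp only [Finset.mem_filter, Finset.mem_univ, true_and]
  rw [walkPos_splice_right m a b hab hbm s w m (by omega), hwb, hs.1, hs.2.1, hs.2.2.1]
  ring

lemma zcount_splice {m a b : ℕ} (hab : a < b) (hbm : b ≤ m) {s : Fin m → Bool}
    (hs : s ∈ eset m a b) {w : Fin (b - a) → Bool} (hw : w ∈ bset (b - a)) :
    zcount m (splice m a b hab.le hbm s w) = zcount m s + zcount (b - a) w := by
  classical
  rw [mem_eset] at hs
  obtain ⟨hsm, ha0, hb0, hint⟩ := hs
  have hwb : walkPos (b - a) w (b - a) = 0 := by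
    have := hw; unfold bset at this; simpa using this
  have hout : ∀ t, t ≤ a ∨ b ≤ t →
      walkPos m (splice m a b hab.le hbm s w) t = walkPos m s t := by
    intro t ht
    rcases ht with h | h
    · exact walkPos_splice_left m a b hab.le hbm s w t h
    · rw [walkPos_splice_right m a b hab.le hbm s w t h, hwb, ha0, hb0]; ring
  have hmid : ∀ t, a < t → t < b →
      (walkPos m (splice m a b hab.le hbm s w) t = 0 ↔
        walkPos (b - a) w (t - a) = 0) := by
    intro t h1 h2
    have e := walkPos_splice_mid m a b hab.le hbm s w (t - a) (by omega)
    rw [show a + (t - a) = t by omega] at e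
    rw [e, ha0, zero_add]
  unfold zcount
  have hdecomp : Finset.Icc 1 (m - 1) =
      (Finset.Icc 1 (m - 1) \ Finset.Ioo a b) ∪ Finset.Ioo a b := by
    ext t
    simp only [Finset.mem_union, Finset.mem_sdiff, Finset.mem_Icc, Finset.mem_Ioo]
    omega
  have hdisj : Disjoint (Finset.Icc 1 (m - 1) \ Finset.Ioo a b) (Finset.Ioo a b) :=
    Finset.sdiff_disjoint
  rw [hdecomp, Finset.filter_union, Finset.filter_union,
    Finset.card_union_of_disjoint (Finset.disjoint_filter_filter hdisj),
    Finset.card_union_of_disjoint (Finset.disjoint_filter_filter hdisj)]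
  have hA : ((Finset.Icc 1 (m - 1) \ Finset.Ioo a b).filter
        (fun t => walkPos m (splice m a b hab.le hbm s w) t = 0)).card
      = ((Finset.Icc 1 (m - 1) \ Finset.Ioo a b).filter
        (fun t => walkPos m s t = 0)).card := by
    congr 1
    apply Finset.filter_congr
    intro t ht
    simp only [Finset.mem_sdiff, Finset.mem_Icc, Finset.mem_Ioo] at ht
    rw [hout t (by omega)]
  have hB : ((Finset.Ioo a b).filter
        (fun t => walkPos m (splice m a b hab.le hbm s w) t = 0)).card
      = ((Finset.Icc 1 (b - a - 1)).filter
        (fun t => walkPos (b - a) w t = 0)).card := by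
    apply Finset.card_bij' (fun t _ => t - a) (fun t _ => a + t)
    · intro t ht
      simp only [Finset.mem_filter, Finset.mem_Ioo] at ht
      simp only [Finset.mem_filter, Finset.mem_Icc]
      exact ⟨⟨by omega, by omega⟩, (hmid t ht.1.1 ht.1.2).mp ht.2⟩
    · intro t ht
      simp only [Finset.mem_filter, Finset.mem_Icc] at ht
      simp only [Finset.mem_filter, Finset.mem_Ioo]
      refine ⟨⟨by omega, by omega⟩, ?_⟩
      rw [hmid (a + t) (by omega) (by omega), Nat.add_sub_cancel_left]
      exact ht.2
    · intro t ht
      simp only [Finset.mem_filter, Finset.mem_Ioo] at ht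
      omega
    · intro t ht
      simp only [Finset.mem_filter, Finset.mem_Icc] at ht
      omega
  have hC : ((Finset.Ioo a b).filter (fun t => walkPos m s t = 0)).card = 0 := by
    rw [Finset.card_eq_zero, Finset.filter_eq_empty_iff]
    intro t ht
    simp only [Finset.mem_Ioo] at ht
    exact hint t ht.1 ht.2
  rw [hA, hB, hC]
  ring

/-- the excursion-replacement inequality -/
lemma eset_bound {β : ℝ} (hβ : 0 ≤ β) (m a b : ℕ) (hab : a < b) (hbm : b ≤ m) :
    Qp β (b - a) * (∑ s ∈ eset m a b, Real.exp (β * zcount m s))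
      ≤ (2 : ℝ) ^ (b - a) * Qp β m := by
  classical
  have hfactor : ∑ p ∈ (eset m a b) ×ˢ (bset (b - a)),
        Real.exp (β * zcount m (splice m a b hab.le hbm p.1 p.2))
      = Qp β (b - a) * (∑ s ∈ eset m a b, Real.exp (β * zcount m s)) := by
    rw [Finset.sum_product]
    have hterm : ∀ s ∈ eset m a b,
        ∑ w ∈ bset (b - a), Real.exp (β * zcount m (splice m a b hab.le hbm s w))
          = Real.exp (β * zcount m s) * Qp β (b - a) := by
      intro s hs
      unfold Qp
      rw [Finset.mul_sum]
      apply Finset.sum_congr rfl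
      intro w hw
      rw [zcount_splice hab hbm hs hw, ← Real.exp_add]
      congr 1
      push_cast
      ring
    rw [Finset.sum_congr rfl hterm, ← Finset.sum_mul]
    ring
  rw [← hfactor]
  have hinj : ∀ p ∈ (eset m a b) ×ˢ (bset (b - a)), ∀ q ∈ (eset m a b) ×ˢ (bset (b - a)),
      (fun p : (Fin m → Bool) × (Fin (b - a) → Bool) =>
        (splice m a b hab.le hbm p.1 p.2, subw m a (b - a) (by omega) p.1)) p
      = (fun p : (Fin m → Bool) × (Fin (b - a) → Bool) =>
        (splice m a b hab.le hbm p.1 p.2, subw m a (b - a) (by omega) p.1)) q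
      → p = q := by
    intro p _ q _ h
    simp only [Prod.mk.injEq] at h
    obtain ⟨h1, h2⟩ := h
    have hp2 : p.2 = subw m a (b - a) (by omega) (splice m a b hab.le hbm p.1 p.2) :=
      (win_splice m a b hab.le hbm p.1 p.2).symm
    have hq2 : q.2 = subw m a (b - a) (by omega) (splice m a b hab.le hbm q.1 q.2) :=
      (win_splice m a b hab.le hbm q.1 q.2).symm
    have e2 : p.2 = q.2 := by rw [hp2, hq2, h1]
    have hp1 : p.1 = splice m a b hab.le hbm (splice m a b hab.le hbm p.1 p.2)
        (subw m a (b - a) (by omega) p.1) := (splice_win m a b hab.le hbm p.1 p.2).symm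
    have hq1 : q.1 = splice m a b hab.le hbm (splice m a b hab.le hbm q.1 q.2)
        (subw m a (b - a) (by omega) q.1) := (splice_win m a b hab.le hbm q.1 q.2).symm
    have e1 : p.1 = q.1 := by rw [hp1, hq1, h1, h2]
    exact Prod.ext e1 e2
  have himg : ∑ q ∈ ((eset m a b) ×ˢ (bset (b - a))).image
        (fun p : (Fin m → Bool) × (Fin (b - a) → Bool) =>
          (splice m a b hab.le hbm p.1 p.2, subw m a (b - a) (by omega) p.1)),
        Real.exp (β * zcount m q.1)
      = ∑ p ∈ (eset m a b) ×ˢ (bset (b - a)),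
        Real.exp (β * zcount m (splice m a b hab.le hbm p.1 p.2)) := by
    rw [Finset.sum_image hinj]
  rw [← himg]
  have hsub : (((eset m a b) ×ˢ (bset (b - a))).image
      (fun p : (Fin m → Bool) × (Fin (b - a) → Bool) =>
        (splice m a b hab.le hbm p.1 p.2, subw m a (b - a) (by omega) p.1)))
      ⊆ (bset m) ×ˢ (Finset.univ : Finset (Fin (b - a) → Bool)) := by
    intro q hq
    rcases Finset.mem_image.mp hq with ⟨p, hp, rfl⟩
    rw [Finset.mem_product] at hp ⊢
    exact ⟨splice_mem_bset hab.le hbm hp.1 hp.2, Finset.mem_univ _⟩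
  calc ∑ q ∈ (((eset m a b) ×ˢ (bset (b - a))).image
        (fun p : (Fin m → Bool) × (Fin (b - a) → Bool) =>
          (splice m a b hab.le hbm p.1 p.2, subw m a (b - a) (by omega) p.1))),
        Real.exp (β * zcount m q.1)
      ≤ ∑ q ∈ (bset m) ×ˢ (Finset.univ : Finset (Fin (b - a) → Bool)),
        Real.exp (β * zcount m q.1) :=
        Finset.sum_le_sum_of_subset_of_nonneg hsub (fun _ _ _ => (Real.exp_pos _).le)
    _ = (2 : ℝ) ^ (b - a) * Qp β m := by
        rw [Finset.sum_product]
        have : ∀ s ∈ bset m, ∑ _w ∈ (Finset.univ : Finset (Fin (b - a) → Bool)),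
            Real.exp (β * zcount m s) = (2 : ℝ) ^ (b - a) * Real.exp (β * zcount m s) := by
          intro s _
          rw [Finset.sum_const, Finset.card_univ, nsmul_eq_mul]
          congr 1
          rw [Fintype.card_fun, Fintype.card_bool, Fintype.card_fin]
          push_cast
          ring
        rw [Finset.sum_congr rfl this, ← Finset.mul_sum]
        rfl

/-- summed form with exponential decay -/
lemma eset_sum_bound {β : ℝ} (hβ : 0 ≤ β) {k : ℕ} (hk : 1 ≤ k)
    (hgood : Real.exp 1 * 4 ^ k ≤ Qp β (2 * k)) (m a b : ℕ) (hab : a < b) (hbm : b ≤ m) :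
    ∑ s ∈ eset m a b, Real.exp (β * zcount m s)
      ≤ 2 * Real.sqrt k * Real.exp 1 *
          Real.exp (-((b - a : ℕ) : ℝ) / (2 * k)) * Qp β m := by
  rcases Finset.eq_empty_or_nonempty (eset m a b) with he | hne
  · rw [he, Finset.sum_empty]
    have h1 : (0:ℝ) ≤ 2 * Real.sqrt k * Real.exp 1 * Real.exp (-((b - a : ℕ) : ℝ) / (2 * k)) :=
      by positivity
    exact mul_nonneg h1 (Qp_nonneg _ _)
  · obtain ⟨s0, hs0⟩ := hne
    have hwin : subw m a (b - a) (by omega) s0 ∈ bset (b - a) := win_mem_bset hab.le hbm hs0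
    have heven := even_of_mem_bset hwin
    obtain ⟨j, hj⟩ : ∃ j, b - a = 2 * j := ⟨(b - a) / 2, by omega⟩
    have hQpos : 0 < Qp β (2 * j) := Qp_pos hβ j
    have hdecay := four_pow_le_decay hβ hk hgood j
    have hEb := eset_bound hβ m a b hab hbm
    rw [hj] at hEb
    have h2L : (2 : ℝ) ^ (2 * j) = 4 ^ j := by rw [pow_mul]; norm_num
    rw [h2L] at hEb
    set S := ∑ s ∈ eset m a b, Real.exp (β * zcount m s) with hS
    set Z := Qp β m with hZ
    have hZ0 : 0 ≤ Z := Qp_nonneg _ _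
    have hstep : Qp β (2 * j) * S
        ≤ Qp β (2 * j) * (2 * Real.sqrt k * Real.exp 1 * Real.exp (-(j : ℝ) / k) * Z) := by
      calc Qp β (2 * j) * S ≤ 4 ^ j * Z := hEb
        _ ≤ (2 * Real.sqrt k * Real.exp 1 * Real.exp (-(j : ℝ) / k) * Qp β (2 * j)) * Z :=
            mul_le_mul_of_nonneg_right hdecay hZ0
        _ = Qp β (2 * j) * (2 * Real.sqrt k * Real.exp 1 * Real.exp (-(j : ℝ) / k) * Z) := by
            ring
    have hfin : S ≤ 2 * Real.sqrt k * Real.exp 1 * Real.exp (-(j : ℝ) / k) * Z :=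
      le_of_mul_le_mul_left hstep hQpos
    have hcast : Real.exp (-(j : ℝ) / k) = Real.exp (-((b - a : ℕ) : ℝ) / (2 * k)) := by
      congr 1
      rw [hj]
      push_cast
      ring
    rw [hcast] at hfin
    exact hfin

end SRW
namespace SRW

/-! ### final assembly helpers -/

lemma sum_biUnion_le {ι α : Type*} [DecidableEq ι] [DecidableEq α] {A : Finset ι}
    {E : ι → Finset α} {g : α → ℝ} (hg : ∀ a, 0 ≤ g a) :
    ∑ a ∈ A.biUnion E, g a ≤ ∑ p ∈ A, ∑ a ∈ E p, g a := by
  induction A using Finset.induction_on with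
  | empty => simp
  | insert _ _ hA ih =>
      rename_i i A'
      rw [Finset.biUnion_insert, Finset.sum_insert hA]
      have h2 : 0 ≤ ∑ x ∈ E i ∩ A'.biUnion E, g x := Finset.sum_nonneg fun _ _ => hg _
      have h3 := Finset.sum_union_inter (s₁ := E i) (s₂ := A'.biUnion E) (f := g)
      linarith [ih]

lemma geom_bound {s : ℝ} (h0 : 0 ≤ s) (h1 : s < 1) (M : ℕ) :
    ∑ i ∈ Finset.range M, s ^ i ≤ 1 / (1 - s) := by
  have h2 : (∑ i ∈ Finset.range M, s ^ i) * (1 - s) = 1 - s ^ M := by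
    linear_combination -geom_sum_mul s M
  rw [le_div_iff₀ (by linarith)]
  calc (∑ i ∈ Finset.range M, s ^ i) * (1 - s) = 1 - s ^ M := h2
    _ ≤ 1 := by nlinarith [pow_nonneg h0 M]

lemma sum_pow_right {s : ℝ} (h0 : 0 ≤ s) (h1 : s < 1) (x m : ℕ) :
    ∑ b ∈ Finset.Icc (x + 1) m, s ^ (b - x) ≤ 1 / (1 - s) := by
  classical
  have himg : ∑ b ∈ Finset.Icc (x + 1) m, s ^ (b - x)
      = ∑ i ∈ (Finset.Icc (x + 1) m).image (fun b => b - x), s ^ i := by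
    rw [Finset.sum_image]
    intro b hb b' hb' h
    rw [Finset.mem_coe, Finset.mem_Icc] at hb hb'
    simp only at h
    omega
  rw [himg]
  calc ∑ i ∈ (Finset.Icc (x + 1) m).image (fun b => b - x), s ^ i
      ≤ ∑ i ∈ Finset.range (m + 1), s ^ i := by
        apply Finset.sum_le_sum_of_subset_of_nonneg
        · intro i hi
          rcases Finset.mem_image.mp hi with ⟨b, hb, rfl⟩
          rw [Finset.mem_Icc] at hb
          rw [Finset.mem_range]
          omega
        · intro i _ _
          positivity
    _ ≤ 1 / (1 - s) := geom_bound h0 h1 _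

lemma sum_pow_left {s : ℝ} (h0 : 0 ≤ s) (h1 : s < 1) (x : ℕ) :
    ∑ a ∈ Finset.range x, s ^ (x - a) ≤ 1 / (1 - s) := by
  classical
  have himg : ∑ a ∈ Finset.range x, s ^ (x - a)
      = ∑ i ∈ (Finset.range x).image (fun a => x - a), s ^ i := by
    rw [Finset.sum_image]
    intro a ha a' ha' h
    rw [Finset.mem_coe, Finset.mem_range] at ha ha'
    simp only at h
    omega
  rw [himg]
  calc ∑ i ∈ (Finset.range x).image (fun a => x - a), s ^ i
      ≤ ∑ i ∈ Finset.range (x + 1), s ^ i := by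
        apply Finset.sum_le_sum_of_subset_of_nonneg
        · intro i hi
          rcases Finset.mem_image.mp hi with ⟨a, ha, rfl⟩
          rw [Finset.mem_range] at ha ⊢
          omega
        · intro i _ _
          positivity
    _ ≤ 1 / (1 - s) := geom_bound h0 h1 _

lemma sq_exp_decay (k L : ℕ) (hk : 1 ≤ k) :
    ((L : ℝ)) ^ 2 * Real.exp (-(L : ℝ) / (2 * k))
      ≤ 64 * (k : ℝ) ^ 2 * (Real.exp (-(1 : ℝ) / (4 * k))) ^ L := by
  have hkR : (0 : ℝ) < (k : ℝ) := by exact_mod_cast hk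
  have hu : ((L : ℝ) / (4 * k)) ^ 2 / 4 ≤ Real.exp ((L : ℝ) / (4 * k)) :=
    exp_ge_sq_div_four (by positivity)
  have hEpos : 0 < Real.exp ((L : ℝ) / (4 * k)) := Real.exp_pos _
  have e1 : (Real.exp (-(1 : ℝ) / (4 * k))) ^ L = Real.exp (-(L : ℝ) / (4 * k)) := by
    rw [show (-(L : ℝ) / (4 * (k : ℝ))) = (L : ℕ) * (-(1 : ℝ) / (4 * (k : ℝ))) by
      push_cast; ring, Real.exp_nat_mul]
  have e2 : Real.exp (-(L : ℝ) / (2 * k))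
      = Real.exp (-(L : ℝ) / (4 * k)) * Real.exp (-(L : ℝ) / (4 * k)) := by
    rw [← Real.exp_add]
    congr 1
    ring
  have e3 : Real.exp (-(L : ℝ) / (4 * k)) = (Real.exp ((L : ℝ) / (4 * k)))⁻¹ := by
    rw [← Real.exp_neg]
    congr 1
    ring
  rw [e1, e2, e3]
  rw [← sub_nonneg]
  have key : (L : ℝ) ^ 2 ≤ 64 * (k : ℝ) ^ 2 * Real.exp ((L : ℝ) / (4 * k)) := by
    have h4 : ((L : ℝ) / (4 * k)) ^ 2 / 4 = (L : ℝ) ^ 2 / (64 * (k : ℝ) ^ 2) := by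
      rw [div_pow, div_div]
      congr 1
      ring
    rw [h4] at hu
    rw [div_le_iff₀ (by positivity)] at hu
    linarith [hu]
  have hinv : 0 < (Real.exp ((L : ℝ) / (4 * k)))⁻¹ := by positivity
  have expand : 64 * (k : ℝ) ^ 2 * (Real.exp ((L : ℝ) / (4 * k)))⁻¹
      - (L : ℝ) ^ 2 * ((Real.exp ((L : ℝ) / (4 * k)))⁻¹ * (Real.exp ((L : ℝ) / (4 * k)))⁻¹)
      = ((Real.exp ((L : ℝ) / (4 * k)))⁻¹ * (Real.exp ((L : ℝ) / (4 * k)))⁻¹)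
        * (64 * (k : ℝ) ^ 2 * Real.exp ((L : ℝ) / (4 * k)) - (L : ℝ) ^ 2) := by
    field_simp
  rw [expand]
  apply mul_nonneg (by positivity)
  linarith [key]

lemma cover {m x : ℕ} (hx1 : 1 ≤ x) (hxm : x + 1 ≤ m) {s : Fin m → Bool}
    (hs : s ∈ bset m) (hsx : walkPos m s x ≠ 0) :
    ∃ a b, a < x ∧ x < b ∧ b ≤ m ∧ s ∈ eset m a b := by
  classical
  have hsm : walkPos m s m = 0 := by
    have := hs; unfold bset at this; simpa using this
  set ZA := (Finset.range (x + 1)).filter (fun t => walkPos m s t = 0) with hZA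
  have hZAne : ZA.Nonempty := ⟨0, by
    rw [hZA, Finset.mem_filter, Finset.mem_range]
    exact ⟨by omega, walkPos_zero m s⟩⟩
  set a := ZA.max' hZAne with ha
  have haZ : a ∈ ZA := Finset.max'_mem _ _
  rw [hZA, Finset.mem_filter, Finset.mem_range] at haZ
  have hax : a < x := by
    rcases Nat.lt_or_ge a x with h | h
    · exact h
    · exfalso
      have : a = x := by omega
      exact hsx (this ▸ haZ.2)
  set ZB := (Finset.Icc (x + 1) m).filter (fun t => walkPos m s t = 0) with hZB
  have hZBne : ZB.Nonempty := ⟨m, by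
    rw [hZB, Finset.mem_filter, Finset.mem_Icc]
    exact ⟨⟨by omega, le_rfl⟩, hsm⟩⟩
  set b := ZB.min' hZBne with hb
  have hbZ : b ∈ ZB := Finset.min'_mem _ _
  rw [hZB, Finset.mem_filter, Finset.mem_Icc] at hbZ
  refine ⟨a, b, hax, by omega, hbZ.1.2, ?_⟩
  rw [mem_eset]
  refine ⟨hsm, haZ.2, hbZ.2, ?_⟩
  intro t h1 h2 h0
  rcases Nat.lt_or_ge t (x + 1) with h | h
  · have htZA : t ∈ ZA := by
      rw [hZA, Finset.mem_filter, Finset.mem_range]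
      exact ⟨h, h0⟩
    have := Finset.le_max' ZA t htZA
    omega
  · have htZB : t ∈ ZB := by
      rw [hZB, Finset.mem_filter, Finset.mem_Icc]
      exact ⟨⟨h, by omega⟩, h0⟩
    have := Finset.min'_le ZB t htZB
    omega

lemma sq_bound {m a b x : ℕ} (hax : a < x) (hxb : x < b) (hbm : b ≤ m) {s : Fin m → Bool}
    (hs : s ∈ eset m a b) :
    ((walkPos m s x : ℤ) : ℝ) ^ 2 ≤ ((b - a : ℕ) : ℝ) ^ 2 := by
  rw [mem_eset] at hs
  have h1 : walkPos m s x = walkPos (x - a) (subw m a (x - a) (by omega) s) (x - a) := by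
    have h0 := walkPos_subw m a (x - a) (by omega) s (x - a) le_rfl
    rw [hs.2.1, sub_zero] at h0
    rw [h0, show a + (x - a) = x by omega]
  have h2 : |walkPos m s x| ≤ ((x - a : ℕ) : ℤ) := by
    rw [h1]
    exact abs_walkPos_le _ _ _
  have h3 : |walkPos m s x| ≤ ((b - a : ℕ) : ℤ) := by
    refine le_trans h2 ?_
    exact_mod_cast Nat.cast_le.mpr (by omega : x - a ≤ b - a)
  have h4 : |((walkPos m s x : ℤ) : ℝ)| ≤ ((b - a : ℕ) : ℝ) := by
    rw [← Int.cast_abs]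
    exact_mod_cast h3
  calc ((walkPos m s x : ℤ) : ℝ) ^ 2 = |((walkPos m s x : ℤ) : ℝ)| ^ 2 := (sq_abs _).symm
    _ ≤ ((b - a : ℕ) : ℝ) ^ 2 := by
        apply pow_le_pow_left₀ (abs_nonneg _) h4

end SRW
/-- for every `β > 0` the δ-pinning strongly localizes the tied-down simple
random walk: `sup_{n,x} Ê_{n,β}(φ_x²) < ∞`. -/
theorem stmt9 (β : ℝ) (hβ : 0 < β) :
    ∃ C : ℝ, ∀ n : ℕ, 1 ≤ n → ∀ x : ℕ, x ≤ 2 * n →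
      pinnedExp n β (fun s => ((walkPos (2 * n) s x : ℝ)) ^ 2) ≤ C := by
  classical
  obtain ⟨k, hk, hgood⟩ := SRW.exists_good hβ
  have hkR : (0 : ℝ) < (k : ℝ) := by exact_mod_cast hk
  have hr0 : (0 : ℝ) ≤ Real.exp (-(1 : ℝ) / (4 * (k : ℝ))) := (Real.exp_pos _).le
  have hr1 : Real.exp (-(1 : ℝ) / (4 * (k : ℝ))) < 1 := by
    have h : -(1 : ℝ) / (4 * (k : ℝ)) < 0 :=
      div_neg_of_neg_of_pos (by norm_num) (by positivity)
    calc Real.exp (-(1 : ℝ) / (4 * (k : ℝ))) < Real.exp 0 := Real.exp_lt_exp.mpr h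
      _ = 1 := Real.exp_zero
  have h1r : (0 : ℝ) < 1 - Real.exp (-(1 : ℝ) / (4 * (k : ℝ))) := by linarith
  have hD0 : (0 : ℝ) ≤ 2 * Real.sqrt k * Real.exp 1 := by positivity
  refine ⟨64 * (k : ℝ) ^ 2 * (2 * Real.sqrt k * Real.exp 1) *
    (1 / (1 - Real.exp (-(1 : ℝ) / (4 * (k : ℝ))))) ^ 2, ?_⟩
  intro n hn x hx
  have hZpos : 0 < SRW.Qp β (2 * n) := SRW.Qp_pos hβ.le n
  have hC0 : (0 : ℝ) ≤ 64 * (k : ℝ) ^ 2 * (2 * Real.sqrt k * Real.exp 1) *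
      (1 / (1 - Real.exp (-(1 : ℝ) / (4 * (k : ℝ))))) ^ 2 := by positivity
  have hpe : pinnedExp n β (fun s => ((walkPos (2 * n) s x : ℝ)) ^ 2)
      = (∑ s ∈ SRW.bset (2 * n),
          Real.exp (β * SRW.zcount (2 * n) s) * ((walkPos (2 * n) s x : ℝ)) ^ 2)
        / SRW.Qp β (2 * n) := rfl
  rw [hpe, div_le_iff₀ hZpos]
  rcases (by omega : x = 0 ∨ x = 2 * n ∨ (1 ≤ x ∧ x + 1 ≤ 2 * n)) with h0 | h0 | ⟨hx1, hx2⟩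
  · subst h0
    have hz : ∀ s ∈ SRW.bset (2 * n),
        Real.exp (β * SRW.zcount (2 * n) s) * ((walkPos (2 * n) s 0 : ℝ)) ^ 2 = 0 := by
      intro s _
      rw [SRW.walkPos_zero]
      norm_num
    rw [Finset.sum_eq_zero hz]
    exact mul_nonneg hC0 (SRW.Qp_nonneg _ _)
  · subst h0
    have hz : ∀ s ∈ SRW.bset (2 * n),
        Real.exp (β * SRW.zcount (2 * n) s) * ((walkPos (2 * n) s (2 * n) : ℝ)) ^ 2 = 0 := by
      intro s hs
      have : walkPos (2 * n) s (2 * n) = 0 := by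
        have := hs; unfold SRW.bset at this; simpa using this
      rw [this]
      norm_num
    rw [Finset.sum_eq_zero hz]
    exact mul_nonneg hC0 (SRW.Qp_nonneg _ _)
  · -- main case
    have hg0 : ∀ s : Fin (2 * n) → Bool,
        0 ≤ Real.exp (β * SRW.zcount (2 * n) s) * ((walkPos (2 * n) s x : ℝ)) ^ 2 :=
      fun s => mul_nonneg (Real.exp_pos _).le (sq_nonneg _)
    have hsplit := Finset.sum_filter_add_sum_filter_not (SRW.bset (2 * n))
      (fun s => walkPos (2 * n) s x = 0)
      (fun s => Real.exp (β * SRW.zcount (2 * n) s) * ((walkPos (2 * n) s x : ℝ)) ^ 2)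
    have hzero : ∑ s ∈ (SRW.bset (2 * n)).filter (fun s => walkPos (2 * n) s x = 0),
        Real.exp (β * SRW.zcount (2 * n) s) * ((walkPos (2 * n) s x : ℝ)) ^ 2 = 0 := by
      apply Finset.sum_eq_zero
      intro s hs
      rw [Finset.mem_filter] at hs
      rw [hs.2]
      norm_num
    have hcov : (SRW.bset (2 * n)).filter (fun s => ¬ walkPos (2 * n) s x = 0)
        ⊆ ((Finset.range x) ×ˢ (Finset.Icc (x + 1) (2 * n))).biUnion
            (fun p => SRW.eset (2 * n) p.1 p.2) := by
      intro s hs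
      rw [Finset.mem_filter] at hs
      obtain ⟨a, b, hax, hxb, hbm, hmem⟩ := SRW.cover hx1 hx2 hs.1 hs.2
      rw [Finset.mem_biUnion]
      refine ⟨(a, b), ?_, hmem⟩
      rw [Finset.mem_product, Finset.mem_range, Finset.mem_Icc]
      exact ⟨hax, by omega, hbm⟩
    have hpair : ∀ p ∈ (Finset.range x) ×ˢ (Finset.Icc (x + 1) (2 * n)),
        ∑ s ∈ SRW.eset (2 * n) p.1 p.2,
          Real.exp (β * SRW.zcount (2 * n) s) * ((walkPos (2 * n) s x : ℝ)) ^ 2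
        ≤ (64 * (k : ℝ) ^ 2 * (2 * Real.sqrt k * Real.exp 1) * SRW.Qp β (2 * n)) *
            (Real.exp (-(1 : ℝ) / (4 * (k : ℝ))) ^ (x - p.1) *
              Real.exp (-(1 : ℝ) / (4 * (k : ℝ))) ^ (p.2 - x)) := by
      rintro ⟨a, b⟩ hp
      rw [Finset.mem_product, Finset.mem_range, Finset.mem_Icc] at hp
      have hax := hp.1
      have hxb := hp.2.1
      have hbm := hp.2.2
      have habk : a < b := by omega
      have step1 : ∑ s ∈ SRW.eset (2 * n) a b,
          Real.exp (β * SRW.zcount (2 * n) s) * ((walkPos (2 * n) s x : ℝ)) ^ 2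
          ≤ ((b - a : ℕ) : ℝ) ^ 2 *
            ∑ s ∈ SRW.eset (2 * n) a b, Real.exp (β * SRW.zcount (2 * n) s) := by
        rw [Finset.mul_sum]
        apply Finset.sum_le_sum
        intro s hs
        have hb2 := SRW.sq_bound hax (by omega : x < b) hbm hs
        calc Real.exp (β * SRW.zcount (2 * n) s) * ((walkPos (2 * n) s x : ℝ)) ^ 2
            ≤ Real.exp (β * SRW.zcount (2 * n) s) * ((b - a : ℕ) : ℝ) ^ 2 :=
              mul_le_mul_of_nonneg_left hb2 (Real.exp_pos _).le
          _ = ((b - a : ℕ) : ℝ) ^ 2 * Real.exp (β * SRW.zcount (2 * n) s) := by ring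
      have step2 := SRW.eset_sum_bound hβ.le hk hgood (2 * n) a b habk hbm
      have step3 := SRW.sq_exp_decay k (b - a) hk
      calc ∑ s ∈ SRW.eset (2 * n) a b,
            Real.exp (β * SRW.zcount (2 * n) s) * ((walkPos (2 * n) s x : ℝ)) ^ 2
          ≤ ((b - a : ℕ) : ℝ) ^ 2 *
              ∑ s ∈ SRW.eset (2 * n) a b, Real.exp (β * SRW.zcount (2 * n) s) := step1
        _ ≤ ((b - a : ℕ) : ℝ) ^ 2 * (2 * Real.sqrt k * Real.exp 1 *
              Real.exp (-((b - a : ℕ) : ℝ) / (2 * k)) * SRW.Qp β (2 * n)) :=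
            mul_le_mul_of_nonneg_left step2 (by positivity)
        _ = (2 * Real.sqrt k * Real.exp 1 * SRW.Qp β (2 * n)) *
              (((b - a : ℕ) : ℝ) ^ 2 * Real.exp (-((b - a : ℕ) : ℝ) / (2 * k))) := by ring
        _ ≤ (2 * Real.sqrt k * Real.exp 1 * SRW.Qp β (2 * n)) *
              (64 * (k : ℝ) ^ 2 * Real.exp (-(1 : ℝ) / (4 * (k : ℝ))) ^ (b - a)) := by
            apply mul_le_mul_of_nonneg_left step3
            exact mul_nonneg hD0 (SRW.Qp_nonneg _ _)
        _ = (64 * (k : ℝ) ^ 2 * (2 * Real.sqrt k * Real.exp 1) * SRW.Qp β (2 * n)) *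
              Real.exp (-(1 : ℝ) / (4 * (k : ℝ))) ^ (b - a) := by ring
        _ = (64 * (k : ℝ) ^ 2 * (2 * Real.sqrt k * Real.exp 1) * SRW.Qp β (2 * n)) *
              (Real.exp (-(1 : ℝ) / (4 * (k : ℝ))) ^ (x - a) *
                Real.exp (-(1 : ℝ) / (4 * (k : ℝ))) ^ (b - x)) := by
            rw [← pow_add, show (x - a) + (b - x) = b - a by omega]
    have hsum2 : ∑ p ∈ (Finset.range x) ×ˢ (Finset.Icc (x + 1) (2 * n)),
        (Real.exp (-(1 : ℝ) / (4 * (k : ℝ))) ^ (x - p.1) *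
          Real.exp (-(1 : ℝ) / (4 * (k : ℝ))) ^ (p.2 - x))
        ≤ (1 / (1 - Real.exp (-(1 : ℝ) / (4 * (k : ℝ))))) ^ 2 := by
      rw [Finset.sum_product]
      have hinner : ∀ a ∈ Finset.range x,
          ∑ b ∈ Finset.Icc (x + 1) (2 * n),
            Real.exp (-(1 : ℝ) / (4 * (k : ℝ))) ^ (x - a) *
              Real.exp (-(1 : ℝ) / (4 * (k : ℝ))) ^ (b - x)
          ≤ Real.exp (-(1 : ℝ) / (4 * (k : ℝ))) ^ (x - a) *
              (1 / (1 - Real.exp (-(1 : ℝ) / (4 * (k : ℝ))))) := by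
        intro a _
        rw [← Finset.mul_sum]
        exact mul_le_mul_of_nonneg_left (SRW.sum_pow_right hr0 hr1 x (2 * n))
          (pow_nonneg hr0 _)
      calc ∑ a ∈ Finset.range x, ∑ b ∈ Finset.Icc (x + 1) (2 * n),
            Real.exp (-(1 : ℝ) / (4 * (k : ℝ))) ^ (x - a) *
              Real.exp (-(1 : ℝ) / (4 * (k : ℝ))) ^ (b - x)
          ≤ ∑ a ∈ Finset.range x, Real.exp (-(1 : ℝ) / (4 * (k : ℝ))) ^ (x - a) *
              (1 / (1 - Real.exp (-(1 : ℝ) / (4 * (k : ℝ))))) :=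
            Finset.sum_le_sum hinner
        _ = (∑ a ∈ Finset.range x, Real.exp (-(1 : ℝ) / (4 * (k : ℝ))) ^ (x - a)) *
              (1 / (1 - Real.exp (-(1 : ℝ) / (4 * (k : ℝ))))) := by
            rw [← Finset.sum_mul]
        _ ≤ (1 / (1 - Real.exp (-(1 : ℝ) / (4 * (k : ℝ))))) *
              (1 / (1 - Real.exp (-(1 : ℝ) / (4 * (k : ℝ))))) := by
            apply mul_le_mul_of_nonneg_right (SRW.sum_pow_left hr0 hr1 x)
            positivity
        _ = (1 / (1 - Real.exp (-(1 : ℝ) / (4 * (k : ℝ))))) ^ 2 := by ring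
    calc ∑ s ∈ SRW.bset (2 * n),
          Real.exp (β * SRW.zcount (2 * n) s) * ((walkPos (2 * n) s x : ℝ)) ^ 2
        = ∑ s ∈ (SRW.bset (2 * n)).filter (fun s => ¬ walkPos (2 * n) s x = 0),
          Real.exp (β * SRW.zcount (2 * n) s) * ((walkPos (2 * n) s x : ℝ)) ^ 2 := by
          rw [← hsplit, hzero, zero_add]
      _ ≤ ∑ s ∈ ((Finset.range x) ×ˢ (Finset.Icc (x + 1) (2 * n))).biUnion
            (fun p => SRW.eset (2 * n) p.1 p.2),
          Real.exp (β * SRW.zcount (2 * n) s) * ((walkPos (2 * n) s x : ℝ)) ^ 2 :=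
          Finset.sum_le_sum_of_subset_of_nonneg hcov (fun s _ _ => hg0 s)
      _ ≤ ∑ p ∈ (Finset.range x) ×ˢ (Finset.Icc (x + 1) (2 * n)),
          ∑ s ∈ SRW.eset (2 * n) p.1 p.2,
            Real.exp (β * SRW.zcount (2 * n) s) * ((walkPos (2 * n) s x : ℝ)) ^ 2 :=
          SRW.sum_biUnion_le hg0
      _ ≤ ∑ p ∈ (Finset.range x) ×ˢ (Finset.Icc (x + 1) (2 * n)),
          (64 * (k : ℝ) ^ 2 * (2 * Real.sqrt k * Real.exp 1) * SRW.Qp β (2 * n)) *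
            (Real.exp (-(1 : ℝ) / (4 * (k : ℝ))) ^ (x - p.1) *
              Real.exp (-(1 : ℝ) / (4 * (k : ℝ))) ^ (p.2 - x)) :=
          Finset.sum_le_sum hpair
      _ = (64 * (k : ℝ) ^ 2 * (2 * Real.sqrt k * Real.exp 1) * SRW.Qp β (2 * n)) *
            ∑ p ∈ (Finset.range x) ×ˢ (Finset.Icc (x + 1) (2 * n)),
            (Real.exp (-(1 : ℝ) / (4 * (k : ℝ))) ^ (x - p.1) *
              Real.exp (-(1 : ℝ) / (4 * (k : ℝ))) ^ (p.2 - x)) := by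
          rw [Finset.mul_sum]
      _ ≤ (64 * (k : ℝ) ^ 2 * (2 * Real.sqrt k * Real.exp 1) * SRW.Qp β (2 * n)) *
            (1 / (1 - Real.exp (-(1 : ℝ) / (4 * (k : ℝ))))) ^ 2 := by
          apply mul_le_mul_of_nonneg_left hsum2
          exact mul_nonneg (mul_nonneg (by positivity) hD0) (SRW.Qp_nonneg _ _)
      _ = (64 * (k : ℝ) ^ 2 * (2 * Real.sqrt k * Real.exp 1) *
            (1 / (1 - Real.exp (-(1 : ℝ) / (4 * (k : ℝ))))) ^ 2) * SRW.Qp β (2 * n) := by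
          ring
end

section
/- For the tied-down simple random walk of length 2n with δ-pinning of strength β > 0, the partition function Ẑ_{n,β} = E_n[exp(β ∑_{x=1}^{2n−1} 1_{φ_x=0})] grows exponentially: liminf_{n→∞} (1/n) log Ẑ_{n,β} > 0 for every β > 0. -/
open Filter Classical

/-- Pinned partition function `Ẑ_{n,β} = E_n[exp(β ∑_{x=1}^{2n−1} 1_{φ_x=0})]`, where
`E_n` is the uniform average over tied-down paths of length `2n`. -/
noncomputable def pinnedZ (n : ℕ) (β : ℝ) : ℝ :=
  (∑ s ∈ tiedPaths n, Real.exp (β * numZeros n s)) / (tiedPaths n).card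

namespace Stmt17aux
open Finset

noncomputable def wgt (β : ℝ) (y : ℤ) : ℝ := if y = 0 then Real.exp β else 1

lemma wgt_pos (β : ℝ) (y : ℤ) : 0 < wgt β y := by
  unfold wgt; split
  · exact Real.exp_pos β
  · norm_num

lemma one_le_wgt {β : ℝ} (hβ : 0 ≤ β) (y : ℤ) : 1 ≤ wgt β y := by
  unfold wgt; split
  · rw [← Real.exp_zero]; exact Real.exp_le_exp.2 hβ
  · exact le_refl 1

lemma wgt_neg (β : ℝ) (y : ℤ) : wgt β (-y) = wgt β y := by
  unfold wgt; simp [neg_eq_zero]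

noncomputable def pathZ (β : ℝ) (t : ℕ) (y : ℤ) : ℝ :=
  ∑ s : Fin t → Bool, if walkPos t s t = y
    then ∏ x ∈ Finset.Icc 1 t, wgt β (walkPos t s x) else 0

lemma pathZ_nonneg (β : ℝ) (t : ℕ) (y : ℤ) : 0 ≤ pathZ β t y := by
  apply Finset.sum_nonneg
  intro s _
  split
  · exact Finset.prod_nonneg fun x _ => (wgt_pos β _).le
  · exact le_refl 0

lemma walkPos_snoc (t : ℕ) (s : Fin t → Bool) (b : Bool) {x : ℕ} (hx : x ≤ t) :
    walkPos (t+1) (Fin.snoc s b) x = walkPos t s x := by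
  unfold walkPos
  rw [Fin.sum_univ_castSucc]
  have h1 : ¬ ((Fin.last t : ℕ) < x) := by simp [Fin.val_last]; omega
  rw [if_neg h1, add_zero]
  simp [Fin.snoc_castSucc]

lemma walkPos_apply_of_le (t : ℕ) (s : Fin t → Bool) {i : ℕ} (hi : t ≤ i) :
    walkPos t s i = ∑ j : Fin t, (if s j then (1:ℤ) else -1) := by
  unfold walkPos
  refine Finset.sum_congr rfl fun j _ => ?_
  rw [if_pos (lt_of_lt_of_le j.isLt hi)]

lemma walkPos_snoc_last (t : ℕ) (s : Fin t → Bool) (b : Bool) :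
    walkPos (t+1) (Fin.snoc s b) (t+1) = walkPos t s t + (if b then 1 else -1) := by
  rw [walkPos_apply_of_le (t+1) _ le_rfl, walkPos_apply_of_le t s le_rfl,
    Fin.sum_univ_castSucc]
  simp [Fin.snoc_castSucc, Fin.snoc_last]

lemma pathZ_succ (β : ℝ) (t : ℕ) (y : ℤ) :
    pathZ β (t+1) y = wgt β y * (pathZ β t (y-1) + pathZ β t (y+1)) := by
  classical
  have hbij : Function.Bijective
      (fun p : (Fin t → Bool) × Bool => (Fin.snoc p.1 p.2 : Fin (t+1) → Bool)) :=
    Function.bijective_iff_has_inverse.mpr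
      ⟨fun s => (fun i => s i.castSucc, s (Fin.last t)),
        fun p => Prod.ext (funext fun i => by simp) (by simp),
        fun s => Fin.snoc_init_self s⟩
  have hsum : pathZ β (t+1) y = ∑ p : (Fin t → Bool) × Bool,
      (if walkPos (t+1) (Fin.snoc p.1 p.2) (t+1) = y
        then ∏ x ∈ Finset.Icc 1 (t+1), wgt β (walkPos (t+1) (Fin.snoc p.1 p.2) x) else 0) := by
    rw [pathZ]
    exact (Fintype.sum_bijective _ hbij _ _ (fun p => rfl)).symm
  rw [hsum, Fintype.sum_prod_type]
  have key : ∀ (s : Fin t → Bool) (b : Bool),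
      (if walkPos (t+1) (Fin.snoc s b) (t+1) = y
        then ∏ x ∈ Finset.Icc 1 (t+1), wgt β (walkPos (t+1) (Fin.snoc s b) x) else 0)
      = wgt β y * (if walkPos t s t = y - (if b then 1 else -1)
          then ∏ x ∈ Finset.Icc 1 t, wgt β (walkPos t s x) else 0) := by
    intro s b
    rw [Finset.prod_Icc_succ_top (by omega : 1 ≤ t + 1), walkPos_snoc_last]
    have hprod : ∏ x ∈ Finset.Icc 1 t, wgt β (walkPos (t+1) (Fin.snoc s b) x)
        = ∏ x ∈ Finset.Icc 1 t, wgt β (walkPos t s x) :=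
      Finset.prod_congr rfl fun x hx => by
        rw [walkPos_snoc t s b (Finset.mem_Icc.1 hx).2]
    rw [hprod]
    by_cases h : walkPos t s t = y - (if b then 1 else -1)
    · rw [if_pos (by omega), if_pos h]
      have hy : walkPos t s t + (if b then 1 else -1) = y := by omega
      rw [hy]; ring
    · rw [if_neg (by omega), if_neg h, mul_zero]
  simp only [key, Fintype.sum_bool, if_true, if_false,
    show y - -1 = y + 1 from by ring]
  rw [Finset.sum_add_distrib, ← Finset.mul_sum, ← Finset.mul_sum, mul_add]
  rfl

noncomputable def chi (r : ℝ) (L : ℕ) (y : ℤ) : ℝ :=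
  if y.natAbs ≤ L then r ^ y.natAbs * ((L : ℝ) - y.natAbs) else 0

lemma chi_nonneg {r : ℝ} (hr : 0 ≤ r) (L : ℕ) (y : ℤ) : 0 ≤ chi r L y := by
  unfold chi; split
  · have h2 : (y.natAbs : ℝ) ≤ (L : ℝ) := by exact_mod_cast ‹_›
    have := pow_nonneg hr y.natAbs
    nlinarith
  · exact le_refl 0

lemma chi_neg (r : ℝ) (L : ℕ) (y : ℤ) : chi r L (-y) = chi r L y := by
  unfold chi; rw [Int.natAbs_neg]

lemma chi_coe (r : ℝ) (L : ℕ) {k : ℕ} (h : k ≤ L) :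
    chi r L (k : ℤ) = r ^ k * ((L : ℝ) - k) := by
  unfold chi; simp only [Int.natAbs_natCast]; rw [if_pos h]

lemma chi_le {r : ℝ} (hr0 : 0 ≤ r) (hr1 : r ≤ 1) (L : ℕ) (y : ℤ) : chi r L y ≤ (L : ℝ) := by
  unfold chi; split
  · have h2 : (y.natAbs : ℝ) ≤ (L : ℝ) := by exact_mod_cast ‹_›
    have h3 : r ^ y.natAbs ≤ 1 := pow_le_one₀ hr0 hr1
    have h4 := pow_nonneg hr0 y.natAbs
    nlinarith
  · positivity

lemma chi_zero (r : ℝ) (L : ℕ) : chi r L 0 = (L : ℝ) := by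
  have := chi_coe r L (Nat.zero_le L)
  simpa using this

lemma chi_row {β r : ℝ} {L : ℕ} (hr0 : 0 < r) (hr1 : r < 1)
    {μ : ℝ} (hμr : μ * r ≤ 1 + r ^ 2)
    (hμL : μ * (L : ℝ) ≤ 2 * Real.exp β * r * ((L : ℝ) - 1)) (hL : 2 ≤ L) :
    ∀ y : ℤ, μ * chi r L y ≤ wgt β y * (chi r L (y - 1) + chi r L (y + 1)) := by
  have main : ∀ y : ℤ, 0 ≤ y → μ * chi r L y ≤ wgt β y * (chi r L (y - 1) + chi r L (y + 1)) := by
    intro y hy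
    rcases eq_or_lt_of_le hy with h0 | hpos
    · -- y = 0
      rw [← h0]
      have hc1 : chi r L ((1:ℕ) : ℤ) = r * ((L:ℝ) - 1) := by
        rw [chi_coe r L (by omega : (1:ℕ) ≤ L)]; norm_num
      have hm : chi r L ((0:ℤ) - 1) = r * ((L:ℝ) - 1) := by
        rw [show (0:ℤ) - 1 = -((1:ℕ):ℤ) from by norm_num, chi_neg, hc1]
      have hp : chi r L ((0:ℤ) + 1) = r * ((L:ℝ) - 1) := by
        rw [show (0:ℤ) + 1 = ((1:ℕ):ℤ) from by norm_num, hc1]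
      have hw : wgt β (0:ℤ) = Real.exp β := by unfold wgt; rw [if_pos rfl]
      rw [hm, hp, hw, chi_zero]
      nlinarith [hμL]
    · -- y ≥ 1
      lift y to ℕ using hy with n hn
      have hn1 : 1 ≤ n := by exact_mod_cast hpos
      have hwgt : wgt β (n : ℤ) = 1 := by
        unfold wgt
        rw [if_neg (by exact_mod_cast Nat.one_le_iff_ne_zero.mp hn1)]
      rw [hwgt, one_mul]
      by_cases hnL : n < L
      · obtain ⟨m, rfl⟩ : ∃ m, n = m + 1 := ⟨n - 1, by omega⟩
        have hA : chi r L ((m+1 : ℕ) : ℤ) = r ^ (m+1) * ((L:ℝ) - (m+1)) := by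
          rw [chi_coe r L (by omega : m+1 ≤ L)]; push_cast; ring
        have hB : chi r L (((m+1 : ℕ) : ℤ) - 1) = r ^ m * ((L:ℝ) - m) := by
          rw [show ((m+1 : ℕ) : ℤ) - 1 = ((m:ℕ):ℤ) from by push_cast; ring,
            chi_coe r L (by omega : m ≤ L)]
        have hC : chi r L (((m+1 : ℕ) : ℤ) + 1) = r ^ (m+2) * ((L:ℝ) - (m+2)) := by
          rw [show ((m+1 : ℕ) : ℤ) + 1 = ((m+2:ℕ):ℤ) from by push_cast; ring,
            chi_coe r L (by omega : m+2 ≤ L)]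
          push_cast; ring
        rw [hA, hB, hC]
        have hcast : (m:ℝ) + 2 ≤ (L:ℝ) := by exact_mod_cast (by omega : m + 2 ≤ L)
        have hp : (0:ℝ) ≤ r ^ m := pow_nonneg hr0.le m
        have key := mul_le_mul_of_nonneg_right hμr
          (mul_nonneg hp (by linarith : (0:ℝ) ≤ (L:ℝ) - ((m:ℝ)+1)))
        have h5 : 0 ≤ r ^ m * (1 - r ^ 2) := mul_nonneg hp (by nlinarith)
        have e1 : r ^ (m+1) = r ^ m * r := pow_succ r m
        have e2 : r ^ (m+2) = r ^ m * r ^ 2 := by rw [pow_add]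
        rw [e1, e2]
        nlinarith [key, h5]
      · have hch : chi r L ((n:ℕ) : ℤ) = 0 := by
          unfold chi; simp only [Int.natAbs_natCast]; split_ifs with h
          · have : n = L := by omega
            subst this; simp
          · rfl
        rw [hch, mul_zero]
        exact add_nonneg (chi_nonneg hr0.le _ _) (chi_nonneg hr0.le _ _)
  intro y
  rcases le_or_gt 0 y with hy | hy
  · exact main y hy
  · have h := main (-y) (by omega)
    rw [show -y - 1 = -(y+1) from by ring, show -y + 1 = -(y-1) from by ring,
      chi_neg, chi_neg, chi_neg, wgt_neg] at h
    linarith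

noncomputable def chiE (r : ℝ) (L : ℕ) (y : ℤ) : ℝ := if Even y then chi r L y else 0
noncomputable def chiO (r : ℝ) (L : ℕ) (y : ℤ) : ℝ := if Even y then 0 else chi r L y

lemma chiE_nonneg {r : ℝ} (hr : 0 ≤ r) (L : ℕ) (y : ℤ) : 0 ≤ chiE r L y := by
  unfold chiE; split
  · exact chi_nonneg hr L y
  · exact le_refl 0

lemma rowE {β r μ : ℝ} {L : ℕ}
    (hrow : ∀ y : ℤ, μ * chi r L y ≤ wgt β y * (chi r L (y - 1) + chi r L (y + 1))) :
    ∀ y : ℤ, μ * chiO r L y ≤ wgt β y * (chiE r L (y - 1) + chiE r L (y + 1)) := by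
  intro y
  by_cases hy : Even y
  · simp [chiE, chiO, hy, Int.even_sub_one, Int.even_add_one, (Int.not_odd_iff_even.mpr hy : ¬Odd y)]
  · simp only [chiE, chiO, if_neg hy, Int.even_sub_one, Int.even_add_one,
      if_pos (by exact hy : ¬Even y)]
    exact hrow y

lemma rowO {β r μ : ℝ} {L : ℕ} (hr0 : 0 < r)
    (hrow : ∀ y : ℤ, μ * chi r L y ≤ wgt β y * (chi r L (y - 1) + chi r L (y + 1))) :
    ∀ y : ℤ, μ * chiE r L y ≤ wgt β y * (chiO r L (y - 1) + chiO r L (y + 1)) := by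
  intro y
  by_cases hy : Even y
  · simp only [chiE, chiO, if_pos hy, Int.even_sub_one, Int.even_add_one]
    rw [if_neg (by simp [hy]), if_neg (by simp [hy])]
    exact hrow y
  · simp [chiE, chiO, hy, Int.even_sub_one, Int.even_add_one, Int.not_even_iff_odd.mp hy,
      mul_nonneg (wgt_pos β y).le (add_nonneg (chi_nonneg hr0.le L _) (chi_nonneg hr0.le L _))]

lemma sum_step (t k : ℕ) (hk : k ≤ t) :
    ∑ j : Fin t, (if ((j:ℕ) < k) then (1:ℤ) else -1) = 2*(k:ℤ) - t := by
  induction t with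
  | zero => interval_cases k <;> simp
  | succ t ih =>
    rw [Fin.sum_univ_castSucc]
    rcases Nat.lt_or_ge t k with h | h
    · have hk1 : k = t + 1 := by omega
      subst hk1
      have hall : ∀ j : Fin t, (if ((j.castSucc : ℕ) < t+1) then (1:ℤ) else -1) = 1 := by
        intro j; rw [if_pos]; simp only [Fin.coe_castSucc]; omega
      rw [Finset.sum_congr rfl (fun j _ => hall j)]
      simp only [Fin.val_last, if_pos (by omega : t < t + 1)]
      rw [Finset.sum_const, Finset.card_univ, Fintype.card_fin]
      push_cast; ring
    · have : ∀ j : Fin t, (if ((j.castSucc : ℕ) < k) then (1:ℤ) else -1)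
          = (if ((j:ℕ) < k) then (1:ℤ) else -1) := fun j => by simp
      rw [Finset.sum_congr rfl (fun j _ => this j), ih h,
        if_neg (by simp only [Fin.val_last]; omega)]
      push_cast; ring

lemma endpoint (t k : ℕ) (hk : k ≤ t) :
    walkPos t (fun j => decide ((j:ℕ) < k)) t = 2*(k:ℤ) - t := by
  rw [walkPos_apply_of_le t _ le_rfl, ← sum_step t k hk]
  refine Finset.sum_congr rfl fun j _ => ?_
  by_cases h : (j:ℕ) < k <;> simp [h]

lemma pathZ_ge_one {β : ℝ} (hβ : 0 ≤ β) (t k : ℕ) (hk : k ≤ t) :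
    1 ≤ pathZ β t (2*(k:ℤ) - t) := by
  classical
  set s0 : Fin t → Bool := fun j => decide ((j:ℕ) < k) with hs0def
  have hs0 : walkPos t s0 t = 2*(k:ℤ) - t := endpoint t k hk
  have hterm : (1:ℝ) ≤ (if walkPos t s0 t = 2*(k:ℤ) - t
      then ∏ x ∈ Finset.Icc 1 t, wgt β (walkPos t s0 x) else 0) := by
    rw [if_pos hs0]
    calc (1:ℝ) = ∏ _x ∈ Finset.Icc 1 t, (1:ℝ) := by rw [Finset.prod_const_one]
      _ ≤ ∏ x ∈ Finset.Icc 1 t, wgt β (walkPos t s0 x) :=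
        Finset.prod_le_prod (fun i _ => by norm_num) (fun i _ => one_le_wgt hβ _)
  rw [pathZ]
  refine le_trans hterm (Finset.single_le_sum
    (f := fun s : Fin t → Bool => if walkPos t s t = 2*(k:ℤ) - t
      then ∏ x ∈ Finset.Icc 1 t, wgt β (walkPos t s x) else 0)
    (fun s _ => ?_) (Finset.mem_univ s0))
  split
  · exact Finset.prod_nonneg fun x _ => (wgt_pos β (walkPos t s x)).le
  · exact le_refl 0

lemma base {β r : ℝ} (hβ : 0 ≤ β) (hr0 : 0 ≤ r) (hr1 : r ≤ 1) (L : ℕ) (hL : 0 < L) :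
    ∀ y : ℤ, (1/(L:ℝ)) * chiE r L y ≤ pathZ β (2*L) y := by
  intro y
  by_cases hy : Even y ∧ y.natAbs ≤ L
  · obtain ⟨c, hc⟩ := hy.1
    obtain ⟨k, hk2L, hky⟩ : ∃ k : ℕ, k ≤ 2*L ∧ y = 2*(k:ℤ) - (2*L:ℕ) := by
      refine ⟨(c + L).toNat, by omega, ?_⟩
      have := hy.2
      omega
    have h1 : (1:ℝ) ≤ pathZ β (2*L) y := by
      rw [hky]; exact pathZ_ge_one hβ (2*L) k hk2L
    have h2 : chiE r L y ≤ (L:ℝ) := by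
      unfold chiE; split
      · exact chi_le hr0 hr1 L y
      · positivity
    have hLpos : (0:ℝ) < L := by exact_mod_cast hL
    calc (1/(L:ℝ)) * chiE r L y ≤ (1/(L:ℝ)) * L := by
          apply mul_le_mul_of_nonneg_left h2 (by positivity)
      _ = 1 := by field_simp
      _ ≤ pathZ β (2*L) y := h1
  · have hzero : chiE r L y = 0 := by
      unfold chiE
      rcases Decidable.em (Even y) with he | he
      · rw [if_pos he]
        unfold chi
        rw [if_neg (fun h => hy ⟨he, h⟩)]
      · rw [if_neg he]
    rw [hzero, mul_zero]
    exact pathZ_nonneg β _ y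

lemma evolve {β μ a : ℝ} (hμ : 0 ≤ μ) (ha : 0 ≤ a) {f g : ℤ → ℝ}
    (hrow : ∀ y : ℤ, μ * f y ≤ wgt β y * (g (y-1) + g (y+1))) {T : ℕ}
    (h : ∀ y : ℤ, a * g y ≤ pathZ β T y) :
    ∀ y : ℤ, (a*μ) * f y ≤ pathZ β (T+1) y := by
  intro y
  rw [pathZ_succ]
  calc (a*μ) * f y = a * (μ * f y) := by ring
    _ ≤ a * (wgt β y * (g (y-1) + g (y+1))) := mul_le_mul_of_nonneg_left (hrow y) ha
    _ = wgt β y * (a * g (y-1) + a * g (y+1)) := by ring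
    _ ≤ wgt β y * (pathZ β T (y-1) + pathZ β T (y+1)) :=
        mul_le_mul_of_nonneg_left (add_le_add (h (y-1)) (h (y+1))) (wgt_pos β y).le

lemma induct {β r μ : ℝ} (hβ : 0 ≤ β) (hr0 : 0 < r) (hr1 : r < 1) (hμ : 0 ≤ μ)
    {L : ℕ} (hL : 0 < L)
    (hrow : ∀ y : ℤ, μ * chi r L y ≤ wgt β y * (chi r L (y - 1) + chi r L (y + 1))) :
    ∀ t : ℕ, ∀ y : ℤ, (1/(L:ℝ)) * μ^(2*t) * chiE r L y ≤ pathZ β (2*L + 2*t) y := by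
  intro t
  induction t with
  | zero => simpa using base hβ hr0.le hr1.le L hL
  | succ t ih =>
    have ha : (0:ℝ) ≤ 1/(L:ℝ) * μ^(2*t) := by positivity
    have s1 := evolve hμ ha (rowE hrow) ih
    have s2 := evolve hμ (by positivity : (0:ℝ) ≤ (1/(L:ℝ) * μ^(2*t)) * μ) (rowO hr0 hrow) s1
    intro y
    have harith : (1/(L:ℝ)) * μ^(2*(t+1)) = ((1/(L:ℝ) * μ^(2*t)) * μ) * μ := by ring
    have hidx : 2*L + 2*(t+1) = (2*L + 2*t + 1) + 1 := by ring
    rw [harith, hidx]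
    exact s2 y

lemma pathZ_eq_sum (β : ℝ) (n : ℕ) (hn : 1 ≤ n) :
    pathZ β (2*n) 0 = Real.exp β * ∑ s ∈ tiedPaths n, Real.exp (β * numZeros n s) := by
  rw [pathZ, tiedPaths, Finset.sum_filter, Finset.mul_sum]
  refine Finset.sum_congr rfl fun s _ => ?_
  by_cases h : walkPos (2*n) s (2*n) = 0
  · rw [if_pos h, if_pos h]
    have hsplit : Finset.Icc 1 (2*n) = insert (2*n) (Finset.Icc 1 (2*n-1)) := by
      ext x; simp only [Finset.mem_Icc, Finset.mem_insert]; omega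
    have hnotmem : 2*n ∉ Finset.Icc 1 (2*n-1) := by simp only [Finset.mem_Icc]; omega
    rw [hsplit, Finset.prod_insert hnotmem]
    have h2 : wgt β (walkPos (2*n) s (2*n)) = Real.exp β := by
      rw [h]; unfold wgt; rw [if_pos rfl]
    rw [h2]
    have hrest : ∏ x ∈ Finset.Icc 1 (2*n-1), wgt β (walkPos (2*n) s x)
        = Real.exp β ^ numZeros n s := by
      rw [← Finset.prod_filter_mul_prod_filter_not (Finset.Icc 1 (2*n-1))
        (fun x => walkPos (2*n) s x = 0) (fun x => wgt β (walkPos (2*n) s x))]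
      have h1 : ∏ x ∈ (Finset.Icc 1 (2*n-1)).filter (fun x => walkPos (2*n) s x = 0),
          wgt β (walkPos (2*n) s x) = ∏ _x ∈ (Finset.Icc 1 (2*n-1)).filter
            (fun x => walkPos (2*n) s x = 0), Real.exp β :=
        Finset.prod_congr rfl fun x hx => by
          unfold wgt; rw [if_pos (Finset.mem_filter.1 hx).2]
      have h2' : ∏ x ∈ (Finset.Icc 1 (2*n-1)).filter (fun x => ¬walkPos (2*n) s x = 0),
          wgt β (walkPos (2*n) s x) = 1 :=
        Finset.prod_eq_one fun x hx => by
          unfold wgt; rw [if_neg (Finset.mem_filter.1 hx).2]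
      rw [h1, h2', Finset.prod_const, mul_one]
      rfl
    rw [hrest, ← Real.exp_nat_mul, mul_comm (↑(numZeros n s)) β]
  · rw [if_neg h, if_neg h, mul_zero]

lemma card_tied_pos (n : ℕ) : 0 < (tiedPaths n).card := by
  refine Finset.card_pos.2 ⟨fun j => decide ((j:ℕ) < n), ?_⟩
  rw [tiedPaths, Finset.mem_filter]
  refine ⟨Finset.mem_univ _, ?_⟩
  rw [endpoint (2*n) n (by omega)]
  push_cast; ring

lemma card_tied_le (n : ℕ) : ((tiedPaths n).card : ℝ) ≤ 2^(2*n) := by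
  have h1 : (tiedPaths n).card ≤ 2^(2*n) := by
    calc (tiedPaths n).card ≤ Finset.univ.card := Finset.card_filter_le _ _
      _ = 2^(2*n) := by rw [Finset.card_univ]; simp [Fintype.card_fun]
  exact_mod_cast h1

end Stmt17aux

set_option maxHeartbeats 1600000 in
/-- for every `β > 0` the pinned partition function grows exponentially:
`liminf (1/n) log Ẑ_{n,β} > 0`. -/
theorem stmt17 (β : ℝ) (hβ : 0 < β) :
    0 < atTop.liminf (fun n : ℕ => Real.log (pinnedZ n β) / n) := by
  classical
  have hβ' : 0 ≤ β := hβ.le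
  have hexp : 1 < Real.exp β := by
    rw [← Real.exp_zero]; exact Real.exp_lt_exp.2 hβ
  have hEpos : 0 < Real.exp β := Real.exp_pos β
  have hden : 0 < 2*Real.exp β - 1 := by linarith
  set r := Real.sqrt (1/(2*Real.exp β - 1)) with hrdef
  have hr2 : r^2 = 1/(2*Real.exp β - 1) := Real.sq_sqrt (by positivity)
  have hr0 : 0 < r := Real.sqrt_pos.2 (by positivity)
  have hr2lt : r^2 < 1 := by rw [hr2, div_lt_one hden]; linarith
  have hr1 : r < 1 := by nlinarith
  have hE : 2*Real.exp β*r^2 = 1 + r^2 := by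
    rw [hr2]; field_simp; ring
  set lam := (1 + r^2)/r with hlamdef
  have hlampos : 0 < lam := by positivity
  have hlam2 : 2 < lam := by
    rw [hlamdef, lt_div_iff₀ hr0]
    nlinarith [sq_nonneg (1 - r), hr1, hr0]
  obtain ⟨L0, hL0⟩ := exists_nat_gt (lam/(lam - 2))
  set L := L0 + 2 with hLdef
  have hL2 : 2 ≤ L := by omega
  have hLpos : 0 < L := by omega
  have hLR : (0:ℝ) < L := by exact_mod_cast hLpos
  have hLgt : lam/(lam-2) < (L:ℝ) := by
    refine lt_of_lt_of_le hL0 ?_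
    exact_mod_cast (by omega : L0 ≤ L)
  set μ := lam * ((L:ℝ)-1)/L with hμdef
  have hlamL : lam < (L:ℝ)*(lam-2) := by
    rw [div_lt_iff₀ (by linarith : (0:ℝ) < lam - 2)] at hLgt
    linarith [hLgt]
  have hμ2 : 2 < μ := by
    rw [hμdef, lt_div_iff₀ hLR]
    nlinarith
  have hμ0 : 0 ≤ μ := by linarith
  have hμlam : μ ≤ lam := by
    rw [hμdef, div_le_iff₀ hLR]
    nlinarith
  have hlamr : lam * r = 1 + r^2 := by
    rw [hlamdef]; field_simp
  have hμr : μ * r ≤ 1 + r^2 := by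
    calc μ * r ≤ lam * r := by nlinarith
      _ = 1 + r^2 := hlamr
  have h2Er : 2*Real.exp β*r = lam := by
    rw [hlamdef, eq_div_iff hr0.ne']
    nlinarith [hE]
  have hμL : μ * (L:ℝ) ≤ 2*Real.exp β*r*((L:ℝ)-1) := by
    rw [h2Er, hμdef]
    field_simp
    exact le_rfl
  have hrow := Stmt17aux.chi_row (β := β) hr0 hr1 hμr hμL hL2
  have hind := Stmt17aux.induct hβ' hr0 hr1 hμ0 hLpos hrow
  have hkey : ∀ n : ℕ, L ≤ n → μ^(2*(n-L)) ≤ Stmt17aux.pathZ β (2*n) 0 := by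
    intro n hn
    have h := hind (n - L) 0
    rw [show Stmt17aux.chiE r L 0 = (L:ℝ) from by
      rw [Stmt17aux.chiE, if_pos Even.zero, Stmt17aux.chi_zero]] at h
    rw [show 2*L + 2*(n-L) = 2*n from by omega] at h
    calc μ^(2*(n-L)) = 1/(L:ℝ) * μ^(2*(n-L)) * L := by field_simp
      _ ≤ _ := h
  -- lower bound on pinnedZ
  have hlow : ∀ n : ℕ, L ≤ n →
      Real.exp (-β) * μ^(2*(n-L)) / 2^(2*n) ≤ pinnedZ n β := by
    intro n hn
    have hn1 : 1 ≤ n := by omega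
    have hS : ∑ s ∈ tiedPaths n, Real.exp (β * numZeros n s)
        = Real.exp (-β) * Stmt17aux.pathZ β (2*n) 0 := by
      rw [Stmt17aux.pathZ_eq_sum β n hn1, ← mul_assoc, ← Real.exp_add]
      norm_num
    have hSum0 : 0 ≤ ∑ s ∈ tiedPaths n, Real.exp (β * numZeros n s) :=
      Finset.sum_nonneg fun s _ => (Real.exp_pos _).le
    have hcardpos : (0:ℝ) < (tiedPaths n).card := by
      exact_mod_cast Stmt17aux.card_tied_pos n
    have h1 : (∑ s ∈ tiedPaths n, Real.exp (β * numZeros n s)) / 2^(2*n)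
        ≤ pinnedZ n β := by
      rw [pinnedZ]
      exact div_le_div_of_nonneg_left hSum0 hcardpos (Stmt17aux.card_tied_le n)
    refine le_trans ?_ h1
    apply div_le_div_of_nonneg_right ?_ (by positivity)
    rw [hS]
    exact mul_le_mul_of_nonneg_left (hkey n hn) (Real.exp_pos _).le
  -- the eventual lower bound on log pinnedZ / n
  set c₀ : ℝ := 2*Real.log μ - 2*Real.log 2 with hc₀def
  have hc₀ : 0 < c₀ := by
    have := Real.log_lt_log (by norm_num : (0:ℝ) < 2) hμ2
    rw [hc₀def]; linarith
  set g : ℕ → ℝ := fun n => c₀ - (β + 2*(L:ℝ)*Real.log μ)/n with hgdef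
  have hflow : ∀ n : ℕ, L ≤ n → g n ≤ Real.log (pinnedZ n β) / n := by
    intro n hn
    have hn0 : (0:ℝ) < n := by
      have : 0 < n := by omega
      exact_mod_cast this
    have hLBpos : 0 < Real.exp (-β) * μ^(2*(n-L)) / 2^(2*n) := by positivity
    have hlog : Real.log (Real.exp (-β) * μ^(2*(n-L)) / 2^(2*n))
        ≤ Real.log (pinnedZ n β) := Real.log_le_log hLBpos (hlow n hn)
    have hlogeq : Real.log (Real.exp (-β) * μ^(2*(n-L)) / 2^(2*n))
        = -β + (2*(n:ℝ) - 2*L)*Real.log μ - (2*n)*Real.log 2 := by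
      rw [Real.log_div (by positivity) (by positivity),
        Real.log_mul (by positivity) (by positivity),
        Real.log_exp, Real.log_pow, Real.log_pow]
      have hcast : ((2*(n-L) : ℕ) : ℝ) = 2*(n:ℝ) - 2*(L:ℝ) := by
        push_cast [Nat.cast_sub hn]
        ring
      rw [hcast]
      push_cast
      ring
    have hdiv : (-β + (2*(n:ℝ) - 2*L)*Real.log μ - (2*n)*Real.log 2)/n = g n := by
      rw [hgdef, hc₀def]
      field_simp
      ring
    calc g n = (-β + (2*(n:ℝ) - 2*L)*Real.log μ - (2*n)*Real.log 2)/n := hdiv.symm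
      _ ≤ Real.log (pinnedZ n β) / n := by
          apply div_le_div_of_nonneg_right ?_ hn0.le
          rw [← hlogeq]; exact hlog
  have hg : Tendsto g atTop (nhds c₀) := by
    have h1 : Tendsto (fun n : ℕ => (β + 2*(L:ℝ)*Real.log μ)/n) atTop (nhds 0) :=
      Tendsto.div_atTop tendsto_const_nhds tendsto_natCast_atTop_atTop
    have h2 := (tendsto_const_nhds (x := c₀) (f := atTop (α := ℕ))).sub h1
    simpa using h2
  have hupp : ∀ n : ℕ, L ≤ n → Real.log (pinnedZ n β) / n ≤ 2*β := by
    intro n hn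
    have hn0 : (0:ℝ) < n := by
      have : 0 < n := by omega
      exact_mod_cast this
    have hcardpos : (0:ℝ) < (tiedPaths n).card := by
      exact_mod_cast Stmt17aux.card_tied_pos n
    have hup : pinnedZ n β ≤ Real.exp (β*(2*n)) := by
      rw [pinnedZ, div_le_iff₀ hcardpos]
      calc ∑ s ∈ tiedPaths n, Real.exp (β * numZeros n s)
          ≤ ∑ _s ∈ tiedPaths n, Real.exp (β*(2*n)) := by
            refine Finset.sum_le_sum fun s _ => Real.exp_le_exp.2 ?_
            have hz : (numZeros n s : ℝ) ≤ 2*(n:ℝ) := by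
              have h3 : numZeros n s ≤ 2*n :=
                le_trans (Finset.card_filter_le _ _) (by rw [Nat.card_Icc]; omega)
              exact_mod_cast h3
            nlinarith
        _ = Real.exp (β*(2*n)) * (tiedPaths n).card := by
            rw [Finset.sum_const, nsmul_eq_mul]; ring
    have hppos : 0 < pinnedZ n β := by
      refine lt_of_lt_of_le ?_ (hlow n hn)
      positivity
    have hlogup : Real.log (pinnedZ n β) ≤ β*(2*n) :=
      (Real.log_le_iff_le_exp hppos).2 hup
    calc Real.log (pinnedZ n β) / n ≤ (β*(2*n))/n :=
          div_le_div_of_nonneg_right hlogup hn0.le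
      _ = 2*β := by field_simp
  have hcob : IsCoboundedUnder (· ≥ ·) atTop (fun n : ℕ => Real.log (pinnedZ n β) / n) :=
    isCoboundedUnder_ge_of_eventually_le atTop (eventually_atTop.2 ⟨L, hupp⟩)
  have hev : ∀ᶠ n in atTop, g n ≤ (fun n : ℕ => Real.log (pinnedZ n β) / n) n :=
    eventually_atTop.2 ⟨L, hflow⟩
  have hliminf := liminf_le_liminf hev (hg.isBoundedUnder_ge) hcob
  rw [hg.liminf_eq] at hliminf
  exact lt_of_lt_of_le hc₀ hliminf
end
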